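/- If σ is a diagonal measure on X^d and the system (X^d, σ, T^{×d}) is conservative, then there are infinitely many integers n such that the transition from D_n(σ) to D_{n+1}(σ) corresponds to the central case, i.e. D_{n+1}(σ) = D_n(σ)(1,…,1). -/

import Mathlib

open MeasureTheory Set
open scoped ENNReal NNReal Classical

noncomputable section

/-- Heights of the towers of the infinite Chacon transformation
(tower `0` is `[0,1)` with a single level, so `chaconH 1 = 8`). -/
def chaconH : ℕ → ℕ
  | 0 => 1
  | n + 1 => 2 * (3 * chaconH n + 1)

/-- Left endpoint of level `k` of tower `n`.  At step `n+1`, tower `n` (which fills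
`[0, hₙ·3⁻ⁿ)`) is cut into three subcolumns of equal width; one spacer is added above the
middle subcolumn and `3hₙ+1` spacers above the third one, the spacers being taken
successively as the leftmost intervals of length `3⁻⁽ⁿ⁺¹⁾` in the unused part of `ℝ₊`;
then the three subcolumns are stacked left under right. -/
def chaconL : ℕ → ℕ → ℝ
  | 0, _ => 0
  | n + 1, k =>
      if k < chaconH n then chaconL n k
      else if k < 2 * chaconH n then chaconL n (k - chaconH n) + (3 : ℝ)⁻¹ ^ (n + 1)
      else if k = 2 * chaconH n then (chaconH n : ℝ) * (3 : ℝ)⁻¹ ^ n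
      else if k ≤ 3 * chaconH n then
        chaconL n (k - 2 * chaconH n - 1) + 2 * (3 : ℝ)⁻¹ ^ (n + 1)
      else (chaconH n : ℝ) * (3 : ℝ)⁻¹ ^ n
        + ((k : ℝ) - 3 * (chaconH n : ℝ)) * (3 : ℝ)⁻¹ ^ (n + 1)

/-- Level `k` of tower `n`: an interval of length `3⁻ⁿ`, closed to the left and open to
the right. -/
def chaconLevel (n k : ℕ) : Set ℝ := Ico (chaconL n k) (chaconL n k + (3 : ℝ)⁻¹ ^ n)

/-- The Chacon transformation on `ℝ`: each point of a non-top level of some tower is sent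
to the point directly above it (the value does not depend on the choice of the tower). -/
def chaconT0 (x : ℝ) : ℝ :=
  if h : ∃ p : ℕ × ℕ, p.2 + 1 < chaconH p.1 ∧ x ∈ chaconLevel p.1 p.2 then
    x - chaconL h.choose.1 h.choose.2 + chaconL h.choose.1 (h.choose.2 + 1)
  else x

/-- The inverse of the Chacon transformation on `ℝ`. -/
def chaconT0inv (x : ℝ) : ℝ :=
  if h : ∃ p : ℕ × ℕ, p.2 + 1 < chaconH p.1 ∧ x ∈ chaconLevel p.1 (p.2 + 1) then
    x - chaconL h.choose.1 (h.choose.2 + 1) + chaconL h.choose.1 h.choose.2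
  else x

/-- The space `X = ℝ₊`. -/
abbrev ChaconX : Type := ↥(Set.Ici (0 : ℝ))

/-- The infinite Chacon transformation `T` on `X = ℝ₊`. -/
def chaconT (x : ChaconX) : ChaconX :=
  ⟨max 0 (chaconT0 (x : ℝ)), Set.mem_Ici.mpr (le_max_left 0 _)⟩

/-- The inverse `T⁻¹` of the Chacon transformation on `X = ℝ₊`. -/
def chaconTinv (x : ChaconX) : ChaconX :=
  ⟨max 0 (chaconT0inv (x : ℝ)), Set.mem_Ici.mpr (le_max_left 0 _)⟩

/-- Integer powers `T^j` of the Chacon transformation. -/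
def chaconTZ (j : ℤ) : ChaconX → ChaconX :=
  if 0 ≤ j then chaconT^[j.toNat] else chaconTinv^[(-j).toNat]

/-- Lebesgue measure `μ` on `X = ℝ₊`. -/
def chaconMu : Measure ChaconX := volume.comap Subtype.val

/-- `C n`: the bottom half of tower `n` (its lowest `hₙ/2` levels), as a subset of `X`. -/
def chaconC (n : ℕ) : Set ChaconX :=
  {x | ∃ k, k < chaconH n / 2 ∧ (x : ℝ) ∈ chaconLevel n k}

/-- `tₙ x ∈ {1,2,3}`: the subcolumn of tower `n` containing `x`
(junk value `0` if `x` is not in tower `n`). -/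
def chaconTn (n : ℕ) (x : ChaconX) : ℕ :=
  if h : ∃ k, k < chaconH n ∧ (x : ℝ) ∈ chaconLevel n k then
    1 + (⌊((x : ℝ) - chaconL n h.choose) * (3 : ℝ) ^ (n + 1)⌋).toNat
  else 0

/-- The Cartesian power `T^{×ι}` of the Chacon transformation, acting coordinatewise. -/
def chaconTd (ι : Type) (x : ι → ChaconX) : ι → ChaconX := fun i => chaconT (x i)

/-- Integer powers `(T^{×ι})^j`, acting coordinatewise. -/
def chaconTdZ (ι : Type) (j : ℤ) (x : ι → ChaconX) : ι → ChaconX := fun i => chaconTZ j (x i)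

/-- `Cₙ^ι ⊆ X^ι`. -/
def chaconCd (ι : Type) (n : ℕ) : Set (ι → ChaconX) := {x | ∀ i, x i ∈ chaconC n}

/-- An `n`-box: a Cartesian product of levels of `C n`. -/
def IsNBox (ι : Type) (n : ℕ) (B : Set (ι → ChaconX)) : Prop :=
  ∃ k : ι → ℕ, (∀ i, k i < chaconH n / 2) ∧
    B = {x : ι → ChaconX | ∀ i, ((x i : ℝ)) ∈ chaconLevel n (k i)}

/-- An `n`-diagonal: a maximal finite family of `n`-boxes `B, T^{×d}B, …, (T^{×d})^ℓ B`,
regarded as the union of its boxes. -/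
def IsNDiagonal (ι : Type) (n : ℕ) (D : Set (ι → ChaconX)) : Prop :=
  ∃ (B : Set (ι → ChaconX)) (ℓ : ℕ),
    (∀ j : ℕ, j ≤ ℓ → IsNBox ι n (chaconTdZ ι (j : ℤ) '' B)) ∧
    ¬ chaconTdZ ι (-1) '' B ⊆ chaconCd ι n ∧
    ¬ chaconTdZ ι ((ℓ : ℤ) + 1) '' B ⊆ chaconCd ι n ∧
    D = ⋃ j ∈ Finset.range (ℓ + 1), chaconTdZ ι (j : ℤ) '' B

/-- A measure is boundedly finite if bounded (measurable) sets have finite measure. -/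
def BoundedlyFinite {α : Type*} [MeasurableSpace α] [PseudoMetricSpace α]
    (σ : Measure α) : Prop :=
  ∀ A : Set α, MeasurableSet A → Bornology.IsBounded A → σ A < ⊤

/-- Diagonal measures on `X^ι`: boundedly finite, `T^{×ι}`-invariant measures which are,
for every large enough `n`, concentrated on a single `n`-diagonal inside `Cₙ^ι`. -/
def IsDiagonalMeasure (ι : Type) [Fintype ι] (σ : Measure (ι → ChaconX)) : Prop :=
  BoundedlyFinite σ ∧ σ.map (chaconTd ι) = σ ∧
    ∃ n₀ : ℕ, 1 ≤ n₀ ∧ ∀ n, n₀ ≤ n →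
      ∃ D : Set (ι → ChaconX), IsNDiagonal ι n D ∧ σ (chaconCd ι n \ D) = 0

/-- A wandering set for the `ℤ`-action `Uz`. -/
def ZWandering {α : Type*} (Uz : ℤ → α → α) (W : Set α) : Prop :=
  ∀ j k : ℤ, j ≠ k → Disjoint (Uz j '' W) (Uz k '' W)

/-- Conservativity: every measurable wandering set is null. -/
def ZConservative {α : Type*} [MeasurableSpace α] (σ : Measure α) (Uz : ℤ → α → α) : Prop :=
  ∀ W : Set α, MeasurableSet W → ZWandering Uz W → σ W = 0

/-- Total dissipativity: mod `σ`, the space is the disjoint union of the iterates of a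
wandering set. -/
def ZTotallyDissipative {α : Type*} [MeasurableSpace α] (σ : Measure α)
    (Uz : ℤ → α → α) : Prop :=
  ∃ W : Set α, MeasurableSet W ∧ ZWandering Uz W ∧ σ ((⋃ j : ℤ, Uz j '' W)ᶜ) = 0

/-- Ergodicity of a (not necessarily finite) invariant measure: every invariant
measurable set is null or conull. -/
def MeasErgodic {α : Type*} [MeasurableSpace α] (σ : Measure α) (U : α → α) : Prop :=
  ∀ A : Set α, MeasurableSet A → U ⁻¹' A = A → σ A = 0 ∨ σ Aᶜ = 0

/-- `Icc a b` is an `n`-crossing for `x`: a maximal finite set of consecutive integers `j`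
with `(T^{×ι})^j x ∈ Cₙ^ι`. -/
def IsCrossing (ι : Type) (n : ℕ) (x : ι → ChaconX) (a b : ℤ) : Prop :=
  a ≤ b ∧ (∀ j : ℤ, a ≤ j → j ≤ b → chaconTdZ ι j x ∈ chaconCd ι n) ∧
    chaconTdZ ι (a - 1) x ∉ chaconCd ι n ∧ chaconTdZ ι (b + 1) x ∉ chaconCd ι n

/-- `n(x)`: the smallest `n ≥ 1` with `x ∈ Cₙ^ι`. -/
def chaconNOf (ι : Type) (x : ι → ChaconX) : ℕ :=
  if h : ∃ n : ℕ, 1 ≤ n ∧ x ∈ chaconCd ι n then Nat.find h else 0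

/-- `B(τ)`: the points of `B` whose coordinate `i` lies in subcolumn `τ i` of tower `n`. -/
def chaconBoxTau (ι : Type) (n : ℕ) (B : Set (ι → ChaconX)) (τ : ι → ℕ) :
    Set (ι → ChaconX) :=
  {x ∈ B | ∀ i, chaconTn n (x i) = τ i}

/-- The transition from the `n`-diagonal `D` to the `(n+1)`-diagonal `D'` is the central
one, i.e. `D' = D(1,…,1)`. -/
def CentralTransition (ι : Type) (n : ℕ) (D D' : Set (ι → ChaconX)) : Prop :=
  ∀ B : Set (ι → ChaconX), IsNBox ι n B → B ⊆ D →
    chaconBoxTau ι n B (fun _ => 1) ⊆ D'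

/-- The `n`-diagonal containing a given set (junk value `∅` if there is none). -/
def diagOfBox (ι : Type) (n : ℕ) (B : Set (ι → ChaconX)) : Set (ι → ChaconX) :=
  if h : ∃ D, IsNDiagonal ι n D ∧ B ⊆ D then h.choose else ∅

/-- `D(τ)`: the `(n+1)`-diagonal containing `B(τ)` for an `n`-box `B ⊆ D`. -/
def diagTau (ι : Type) (n : ℕ) (D : Set (ι → ChaconX)) (τ : ι → ℕ) : Set (ι → ChaconX) :=
  if h : ∃ B, IsNBox ι n B ∧ B ⊆ D then diagOfBox ι (n + 1) (chaconBoxTau ι n h.choose τ)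
  else ∅

/-- A consistent family of diagonals `(Dₙ)_{n ≥ n₀}`. -/
def IsConsistentFamily (ι : Type) (n₀ : ℕ) (D : ℕ → Set (ι → ChaconX)) : Prop :=
  (∀ n, n₀ ≤ n → IsNDiagonal ι n (D n)) ∧
    (chaconCd ι (n₀ - 1) ∩ ⋂ n, ⋂ (_ : n₀ ≤ n), D n).Nonempty ∧
    ∀ n, n₀ ≤ n → D (n + 1) ∩ chaconCd ι n ⊆ D n

/-- `x` is seen by the family of diagonals `(Dₙ)_{n ≥ n₀}`. -/
def SeenByFam (ι : Type) (n₀ : ℕ) (D : ℕ → Set (ι → ChaconX)) (x : ι → ChaconX) : Prop :=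
  ∀ n, n₀ ≤ n → x ∉ chaconCd ι n ∨ x ∈ D n

/-- Graph joinings arising from powers of `T`:
`σ(A₁ × ⋯ × A_d) = α μ(T^{-k₁}A₁ ∩ ⋯ ∩ T^{-k_d}A_d)` for some `0 < α < ∞`. -/
def IsGraphJoining (ι : Type) [Fintype ι] (σ : Measure (ι → ChaconX)) : Prop :=
  ∃ (α : ℝ≥0∞) (k : ι → ℤ), 0 < α ∧ α ≠ ⊤ ∧
    ∀ A : ι → Set ChaconX, (∀ i, MeasurableSet (A i)) →
      σ (Set.univ.pi A) = α * chaconMu (⋂ i, chaconTZ (k i) ⁻¹' A i)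

/-- Ergodic components of `σ`: the nonzero boundedly finite `T^{×ι}`-invariant ergodic
measures, absolutely continuous with respect to `σ`, which appear in its ergodic
decomposition. -/
def IsErgodicComponent (ι : Type) [Fintype ι] (σ ρ : Measure (ι → ChaconX)) : Prop :=
  ρ ≠ 0 ∧ BoundedlyFinite ρ ∧ ρ.map (chaconTd ι) = ρ ∧ MeasErgodic ρ (chaconTd ι) ∧ ρ ≪ σ

end

/-! ### Auxiliary development -/

noncomputable section CHAux

namespace CH

open Set

/-! #### Basic facts about heights -/

lemma h_succ (n : ℕ) : chaconH (n + 1) = 6 * chaconH n + 2 := by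
  show 2 * (3 * chaconH n + 1) = _; ring

lemma h_pos : ∀ n, 0 < chaconH n
  | 0 => Nat.one_pos
  | n + 1 => by rw [h_succ]; omega

lemma h_half (n : ℕ) : chaconH (n + 1) / 2 = 3 * chaconH n + 1 := by
  rw [h_succ]; omega

lemma h_half_le (n : ℕ) : chaconH n / 2 < chaconH n := by
  have := h_pos n; omega

lemma h_ge (n : ℕ) : 4 ^ n ≤ chaconH n := by
  induction n with
  | zero => simp [chaconH]
  | succ n ih => rw [h_succ]; calc 4 ^ (n+1) = 4 * 4 ^ n := by ring
                 _ ≤ 6 * chaconH n + 2 := by omega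

/-! #### The combinatorial mirror of `chaconL` -/

def M : ℕ → ℕ → ℕ
  | 0, _ => 0
  | n + 1, k =>
      if k < chaconH n then 3 * M n k
      else if k < 2 * chaconH n then 3 * M n (k - chaconH n) + 1
      else if k = 2 * chaconH n then 3 * chaconH n
      else if k ≤ 3 * chaconH n then 3 * M n (k - 2 * chaconH n - 1) + 2
      else 3 * chaconH n + (k - 3 * chaconH n)

lemma eps_pos (n : ℕ) : (0:ℝ) < (3 : ℝ)⁻¹ ^ n := by positivity

lemma eps_succ (n : ℕ) : (3:ℝ) * (3 : ℝ)⁻¹ ^ (n+1) = (3 : ℝ)⁻¹ ^ n := by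
  rw [pow_succ]; field_simp


lemma M_lt : ∀ n k, k < chaconH n → M n k < chaconH n
  | 0, k, hk => by
      have h0 : chaconH 0 = 1 := rfl
      have h1 : M 0 k = 0 := rfl
      omega
  | n + 1, k, hk => by
      have hh := h_pos n
      rw [h_succ] at hk ⊢
      by_cases h1 : k < chaconH n
      · rw [M, if_pos h1]; have := M_lt n k h1; omega
      · by_cases h2 : k < 2 * chaconH n
        · rw [M, if_neg h1, if_pos h2]; have := M_lt n (k - chaconH n) (by omega); omega
        · by_cases h3 : k = 2 * chaconH n
          · rw [M, if_neg h1, if_neg h2, if_pos h3]; omega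
          · by_cases h4 : k ≤ 3 * chaconH n
            · rw [M, if_neg h1, if_neg h2, if_neg h3, if_pos h4]
              have := M_lt n (k - 2 * chaconH n - 1) (by omega); omega
            · rw [M, if_neg h1, if_neg h2, if_neg h3, if_neg h4]; omega

lemma L_eq : ∀ n k, chaconL n k = (M n k : ℝ) * (3 : ℝ)⁻¹ ^ n
  | 0, k => by simp [chaconL, M]
  | n + 1, k => by
      by_cases h1 : k < chaconH n
      · rw [show chaconL (n+1) k = chaconL n k from by rw [chaconL, if_pos h1],
          show M (n+1) k = 3 * M n k from by rw [M, if_pos h1], L_eq n k]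
        push_cast
        rw [← eps_succ n]; ring
      · by_cases h2 : k < 2 * chaconH n
        · rw [show chaconL (n+1) k = chaconL n (k - chaconH n) + (3:ℝ)⁻¹ ^ (n+1) from by
            rw [chaconL, if_neg h1, if_pos h2],
            show M (n+1) k = 3 * M n (k - chaconH n) + 1 from by
            rw [M, if_neg h1, if_pos h2], L_eq n (k - chaconH n)]
          push_cast
          rw [← eps_succ n]; ring
        · by_cases h3 : k = 2 * chaconH n
          · rw [show chaconL (n+1) k = (chaconH n : ℝ) * (3:ℝ)⁻¹ ^ n from by
              rw [chaconL, if_neg h1, if_neg h2, if_pos h3],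
              show M (n+1) k = 3 * chaconH n from by
              rw [M, if_neg h1, if_neg h2, if_pos h3]]
            push_cast
            rw [← eps_succ n]; ring
          · by_cases h4 : k ≤ 3 * chaconH n
            · rw [show chaconL (n+1) k
                  = chaconL n (k - 2 * chaconH n - 1) + 2 * (3:ℝ)⁻¹ ^ (n+1) from by
                rw [chaconL, if_neg h1, if_neg h2, if_neg h3, if_pos h4],
                show M (n+1) k = 3 * M n (k - 2 * chaconH n - 1) + 2 from by
                rw [M, if_neg h1, if_neg h2, if_neg h3, if_pos h4],
                L_eq n (k - 2 * chaconH n - 1)]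
              push_cast
              rw [← eps_succ n]; ring
            · rw [show chaconL (n+1) k = (chaconH n : ℝ) * (3:ℝ)⁻¹ ^ n
                  + ((k:ℝ) - 3 * (chaconH n : ℝ)) * (3:ℝ)⁻¹ ^ (n+1) from by
                rw [chaconL, if_neg h1, if_neg h2, if_neg h3, if_neg h4],
                show M (n+1) k = 3 * chaconH n + (k - 3 * chaconH n) from by
                rw [M, if_neg h1, if_neg h2, if_neg h3, if_neg h4]]
              have hk : 3 * chaconH n ≤ k := by omega
              push_cast [Nat.cast_sub hk]
              rw [← eps_succ n]; ring

lemma M_succ_shape (n k : ℕ) :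
    (k < chaconH n ∧ M (n+1) k = 3 * M n k)
    ∨ (chaconH n ≤ k ∧ k < 2 * chaconH n ∧ M (n+1) k = 3 * M n (k - chaconH n) + 1)
    ∨ (k = 2 * chaconH n ∧ M (n+1) k = 3 * chaconH n)
    ∨ (2 * chaconH n < k ∧ k ≤ 3 * chaconH n
        ∧ M (n+1) k = 3 * M n (k - 2 * chaconH n - 1) + 2)
    ∨ (3 * chaconH n < k ∧ M (n+1) k = 3 * chaconH n + (k - 3 * chaconH n)) := by
  by_cases h1 : k < chaconH n
  · exact Or.inl ⟨h1, by rw [M, if_pos h1]⟩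
  · by_cases h2 : k < 2 * chaconH n
    · exact Or.inr (Or.inl ⟨by omega, h2, by rw [M, if_neg h1, if_pos h2]⟩)
    · by_cases h3 : k = 2 * chaconH n
      · exact Or.inr (Or.inr (Or.inl ⟨h3, by rw [M, if_neg h1, if_neg h2, if_pos h3]⟩))
      · by_cases h4 : k ≤ 3 * chaconH n
        · exact Or.inr (Or.inr (Or.inr (Or.inl ⟨by omega, h4,
            by rw [M, if_neg h1, if_neg h2, if_neg h3, if_pos h4]⟩)))
        · exact Or.inr (Or.inr (Or.inr (Or.inr ⟨by omega,
            by rw [M, if_neg h1, if_neg h2, if_neg h3, if_neg h4]⟩)))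

lemma M_inj : ∀ n k k', k < chaconH n → k' < chaconH n → M n k = M n k' → k = k'
  | 0, k, k', hk, hk', _ => by
      have h0 : chaconH 0 = 1 := rfl
      omega
  | n + 1, k, k', hk, hk', he => by
      have hh := h_pos n
      rcases M_succ_shape n k with ⟨c1, e1⟩ | ⟨c1, c1', e1⟩ | ⟨c1, e1⟩ | ⟨c1, c1', e1⟩ |
        ⟨c1, e1⟩ <;>
      rcases M_succ_shape n k' with ⟨c2, e2⟩ | ⟨c2, c2', e2⟩ | ⟨c2, e2⟩ | ⟨c2, c2', e2⟩ |
        ⟨c2, e2⟩ <;> rw [e1, e2] at he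
      · exact M_inj n k k' c1 c2 (by omega)
      · have := M_lt n k c1; have := M_lt n (k' - chaconH n) (by omega); omega
      · have := M_lt n k c1; omega
      · have := M_lt n k c1; have := M_lt n (k' - 2 * chaconH n - 1) (by omega); omega
      · have := M_lt n k c1; omega
      · have := M_lt n k' c2; have := M_lt n (k - chaconH n) (by omega); omega
      · have := M_inj n (k - chaconH n) (k' - chaconH n) (by omega) (by omega) (by omega)
        omega
      · have := M_lt n (k - chaconH n) (by omega); omega
      · have := M_lt n (k - chaconH n) (by omega)
        have := M_lt n (k' - 2 * chaconH n - 1) (by omega); omega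
      · have := M_lt n (k - chaconH n) (by omega); omega
      · have := M_lt n k' c2; omega
      · have := M_lt n (k' - chaconH n) (by omega); omega
      · omega
      · have := M_lt n (k' - 2 * chaconH n - 1) (by omega); omega
      · omega
      · have := M_lt n k' c2; have := M_lt n (k - 2 * chaconH n - 1) (by omega); omega
      · have := M_lt n (k - 2 * chaconH n - 1) (by omega)
        have := M_lt n (k' - chaconH n) (by omega); omega
      · have := M_lt n (k - 2 * chaconH n - 1) (by omega); omega
      · have := M_inj n (k - 2 * chaconH n - 1) (k' - 2 * chaconH n - 1) (by omega)
          (by omega) (by omega)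
        omega
      · have := M_lt n (k - 2 * chaconH n - 1) (by omega); omega
      · have := M_lt n k' c2; omega
      · have := M_lt n (k' - chaconH n) (by omega); omega
      · omega
      · have := M_lt n (k' - 2 * chaconH n - 1) (by omega); omega
      · omega

lemma M_surj : ∀ n u, u < chaconH n → ∃ k, k < chaconH n ∧ M n k = u
  | 0, u, hu => by
      have h0 : chaconH 0 = 1 := rfl
      refine ⟨0, by omega, ?_⟩
      have h1 : M 0 0 = 0 := rfl
      omega
  | n + 1, u, hu => by
      have hh := h_pos n
      rw [h_succ] at hu ⊢
      by_cases c1 : u < 3 * chaconH n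
      · have h3 : u % 3 = 0 ∨ u % 3 = 1 ∨ u % 3 = 2 := by omega
        rcases h3 with h3 | h3 | h3
        · obtain ⟨k, hk, hMk⟩ := M_surj n (u / 3) (by omega)
          exact ⟨k, by omega, by rw [M, if_pos hk]; omega⟩
        · obtain ⟨k, hk, hMk⟩ := M_surj n (u / 3) (by omega)
          refine ⟨k + chaconH n, by omega, ?_⟩
          rw [M, if_neg (by omega), if_pos (by omega)]
          have : k + chaconH n - chaconH n = k := by omega
          rw [this]; omega
        · obtain ⟨k, hk, hMk⟩ := M_surj n (u / 3) (by omega)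
          refine ⟨k + 2 * chaconH n + 1, by omega, ?_⟩
          rw [M, if_neg (by omega), if_neg (by omega), if_neg (by omega),
            if_pos (by omega)]
          have : k + 2 * chaconH n + 1 - 2 * chaconH n - 1 = k := by omega
          rw [this]; omega
      · by_cases c2 : u = 3 * chaconH n
        · exact ⟨2 * chaconH n, by omega,
            by rw [M, if_neg (by omega), if_neg (by omega), if_pos rfl]; omega⟩
        · refine ⟨u, by omega, ?_⟩
          rw [M, if_neg (by omega), if_neg (by omega), if_neg (by omega),
            if_neg (by omega)]
          omega

/-! #### Levels: disjointness, thirds -/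

lemma L_nonneg (n k : ℕ) : 0 ≤ chaconL n k := by
  rw [L_eq]; positivity

lemma L_add_eps_le {n k k' : ℕ} (h : M n k < M n k') :
    chaconL n k + (3:ℝ)⁻¹ ^ n ≤ chaconL n k' := by
  rw [L_eq, L_eq]
  have h1 : ((M n k : ℝ) + 1) ≤ (M n k' : ℝ) := by exact_mod_cast h
  have h2 := (eps_pos n).le
  nlinarith

lemma level_unique {n k k' : ℕ} {x : ℝ} (hk : k < chaconH n) (hk' : k' < chaconH n)
    (hx : x ∈ chaconLevel n k) (hx' : x ∈ chaconLevel n k') : k = k' := by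
  obtain ⟨h1, h2⟩ := hx
  obtain ⟨h1', h2'⟩ := hx'
  by_contra hne
  have hM : M n k ≠ M n k' := fun h => hne (M_inj n k k' hk hk' h)
  rcases lt_or_gt_of_ne hM with h | h
  · linarith [L_add_eps_le h]
  · linarith [L_add_eps_le h]

/-- Offset of the `τ`-th subcolumn. -/
def off (n τ : ℕ) : ℕ :=
  if τ ≤ 1 then 0 else if τ = 2 then chaconH n else 2 * chaconH n + 1

lemma off_le (n τ : ℕ) : off n τ ≤ 2 * chaconH n + 1 := by
  rw [off]; split_ifs <;> omega

lemma Lid1 {n k : ℕ} (hk : k < chaconH n) : chaconL (n+1) k = chaconL n k := by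
  rw [chaconL, if_pos hk]

lemma Lid2 {n k : ℕ} (hk : k < chaconH n) :
    chaconL (n+1) (k + chaconH n) = chaconL n k + (3:ℝ)⁻¹ ^ (n+1) := by
  have h := h_pos n
  rw [chaconL, if_neg (by omega), if_pos (by omega)]
  have h2 : k + chaconH n - chaconH n = k := by omega
  rw [h2]

lemma Lid3 {n k : ℕ} (hk : k < chaconH n) :
    chaconL (n+1) (k + (2 * chaconH n + 1)) = chaconL n k + 2 * (3:ℝ)⁻¹ ^ (n+1) := by
  have h := h_pos n
  rw [chaconL, if_neg (by omega), if_neg (by omega), if_neg (by omega), if_pos (by omega)]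
  have h2 : k + (2 * chaconH n + 1) - 2 * chaconH n - 1 = k := by omega
  rw [h2]

lemma Lid_off {n k : ℕ} (hk : k < chaconH n) {τ : ℕ} (hτ1 : 1 ≤ τ) (hτ3 : τ ≤ 3) :
    chaconL (n+1) (k + off n τ) = chaconL n k + ((τ:ℝ) - 1) * (3:ℝ)⁻¹ ^ (n+1) := by
  interval_cases τ
  · have e : k + off n 1 = k := by simp [off]
    rw [e, Lid1 hk]; norm_num
  · have e : k + off n 2 = k + chaconH n := by simp [off]
    rw [e, Lid2 hk]; norm_num
  · have e : k + off n 3 = k + (2 * chaconH n + 1) := by simp [off]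
    rw [e, Lid3 hk]; norm_num

lemma thirds {n k : ℕ} {x : ℝ} (hk : k < chaconH n) (hx : x ∈ chaconLevel n k) :
    ∃ τ, (1 ≤ τ ∧ τ ≤ 3) ∧ x ∈ chaconLevel (n+1) (k + off n τ) := by
  obtain ⟨h1, h2⟩ := hx
  have he3 : (3:ℝ)⁻¹ ^ n = 3 * (3:ℝ)⁻¹ ^ (n+1) := (eps_succ n).symm
  by_cases c1 : x < chaconL n k + (3:ℝ)⁻¹ ^ (n+1)
  · refine ⟨1, ⟨le_refl 1, by omega⟩, ?_⟩
    rw [chaconLevel, Lid_off hk (le_refl 1) (by omega)]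
    constructor
    · norm_num; linarith
    · norm_num; linarith
  · by_cases c2 : x < chaconL n k + 2 * (3:ℝ)⁻¹ ^ (n+1)
    · refine ⟨2, ⟨by omega, by omega⟩, ?_⟩
      rw [chaconLevel, Lid_off hk (by omega) (by omega)]
      constructor
      · norm_num; linarith
      · norm_num; linarith
    · refine ⟨3, ⟨by omega, by omega⟩, ?_⟩
      rw [chaconLevel, Lid_off hk (by omega) (by omega)]
      constructor
      · norm_num; linarith
      · norm_num; linarith

lemma level_sub {n k : ℕ} (hk : k < chaconH n) {τ : ℕ} (hτ1 : 1 ≤ τ) (hτ3 : τ ≤ 3) :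
    chaconLevel (n+1) (k + off n τ) ⊆ chaconLevel n k := by
  intro x hx
  rw [chaconLevel, Lid_off hk hτ1 hτ3] at hx
  obtain ⟨h1, h2⟩ := hx
  have he3 : (3:ℝ)⁻¹ ^ n = 3 * (3:ℝ)⁻¹ ^ (n+1) := (eps_succ n).symm
  have hτ : (1:ℝ) ≤ (τ:ℝ) ∧ (τ:ℝ) ≤ 3 := ⟨by exact_mod_cast hτ1, by exact_mod_cast hτ3⟩
  have he := eps_pos (n+1)
  have q1 : 0 ≤ ((τ:ℝ) - 1) * (3:ℝ)⁻¹ ^ (n+1) := mul_nonneg (by linarith [hτ.1]) he.le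
  have q2 : ((τ:ℝ) - 1) * (3:ℝ)⁻¹ ^ (n+1) ≤ 2 * (3:ℝ)⁻¹ ^ (n+1) :=
    mul_le_mul_of_nonneg_right (by linarith [hτ.2]) he.le
  constructor
  · linarith
  · linarith

/-! #### Evaluation of `chaconT0` and `chaconT0inv` -/

lemma lift_up {p j : ℕ} {x : ℝ} (hj : j + 1 < chaconH p) (hx : x ∈ chaconLevel p j) :
    ∃ j', (j' + 1 < chaconH (p+1) ∧ x ∈ chaconLevel (p+1) j') ∧
      chaconL (p+1) (j'+1) - chaconL (p+1) j' = chaconL p (j+1) - chaconL p j := by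
  obtain ⟨τ, hτ, hmem⟩ := thirds (by omega : j < chaconH p) hx
  have hoff := off_le p τ
  have hhs := h_succ p
  refine ⟨j + off p τ, ⟨by omega, hmem⟩, ?_⟩
  rw [show j + off p τ + 1 = (j+1) + off p τ from by ring]
  rw [Lid_off hj hτ.1 hτ.2, Lid_off (by omega : j < chaconH p) hτ.1 hτ.2]
  ring

lemma lift_up' {p j : ℕ} {x : ℝ} (hj : j + 1 < chaconH p) (hx : x ∈ chaconLevel p (j+1)) :
    ∃ j', (j' + 1 < chaconH (p+1) ∧ x ∈ chaconLevel (p+1) (j'+1)) ∧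
      chaconL (p+1) (j'+1) - chaconL (p+1) j' = chaconL p (j+1) - chaconL p j := by
  obtain ⟨τ, hτ, hmem⟩ := thirds hj hx
  have hoff := off_le p τ
  have hhs := h_succ p
  refine ⟨j + off p τ, ⟨by omega, ?_⟩, ?_⟩
  · rw [show j + off p τ + 1 = (j+1) + off p τ from by ring]; exact hmem
  · rw [show j + off p τ + 1 = (j+1) + off p τ from by ring]
    rw [Lid_off hj hτ.1 hτ.2, Lid_off (by omega : j < chaconH p) hτ.1 hτ.2]
    ring

lemma lift_to {p j : ℕ} {x : ℝ} (hj : j + 1 < chaconH p) (hx : x ∈ chaconLevel p j)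
    {P : ℕ} (hP : p ≤ P) :
    ∃ J, (J + 1 < chaconH P ∧ x ∈ chaconLevel P J) ∧
      chaconL P (J+1) - chaconL P J = chaconL p (j+1) - chaconL p j := by
  induction P, hP using Nat.le_induction with
  | base => exact ⟨j, ⟨hj, hx⟩, rfl⟩
  | succ P hP ih =>
      obtain ⟨J, ⟨hJ, hxJ⟩, he⟩ := ih
      obtain ⟨J', hw, he'⟩ := lift_up hJ hxJ
      exact ⟨J', hw, by rw [he', he]⟩

lemma lift_to' {p j : ℕ} {x : ℝ} (hj : j + 1 < chaconH p) (hx : x ∈ chaconLevel p (j+1))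
    {P : ℕ} (hP : p ≤ P) :
    ∃ J, (J + 1 < chaconH P ∧ x ∈ chaconLevel P (J+1)) ∧
      chaconL P (J+1) - chaconL P J = chaconL p (j+1) - chaconL p j := by
  induction P, hP using Nat.le_induction with
  | base => exact ⟨j, ⟨hj, hx⟩, rfl⟩
  | succ P hP ih =>
      obtain ⟨J, ⟨hJ, hxJ⟩, he⟩ := ih
      obtain ⟨J', hw, he'⟩ := lift_up' hJ hxJ
      exact ⟨J', hw, by rw [he', he]⟩

lemma T0_welldef {p j q r : ℕ} {x : ℝ} (h1 : j + 1 < chaconH p) (h2 : x ∈ chaconLevel p j)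
    (h3 : r + 1 < chaconH q) (h4 : x ∈ chaconLevel q r) :
    chaconL p (j+1) - chaconL p j = chaconL q (r+1) - chaconL q r := by
  obtain ⟨J, ⟨hJ1, hJ2⟩, eJ⟩ := lift_to h1 h2 (le_max_left p q)
  obtain ⟨R, ⟨hR1, hR2⟩, eR⟩ := lift_to h3 h4 (le_max_right p q)
  have hJR : J = R := level_unique (by omega) (by omega) hJ2 hR2
  rw [← eJ, ← eR, hJR]

lemma T0inv_welldef {p j q r : ℕ} {x : ℝ} (h1 : j + 1 < chaconH p)
    (h2 : x ∈ chaconLevel p (j+1)) (h3 : r + 1 < chaconH q)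
    (h4 : x ∈ chaconLevel q (r+1)) :
    chaconL p (j+1) - chaconL p j = chaconL q (r+1) - chaconL q r := by
  obtain ⟨J, ⟨hJ1, hJ2⟩, eJ⟩ := lift_to' h1 h2 (le_max_left p q)
  obtain ⟨R, ⟨hR1, hR2⟩, eR⟩ := lift_to' h3 h4 (le_max_right p q)
  have hJR : J = R := by
    have := level_unique (by omega : J + 1 < chaconH (max p q))
      (by omega : R + 1 < chaconH (max p q)) hJ2 hR2
    omega
  rw [← eJ, ← eR, hJR]

lemma T0_eval {n k : ℕ} {x : ℝ} (hk : k + 1 < chaconH n) (hx : x ∈ chaconLevel n k) :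
    chaconT0 x = x - chaconL n k + chaconL n (k+1) := by
  have hE : ∃ p : ℕ × ℕ, p.2 + 1 < chaconH p.1 ∧ x ∈ chaconLevel p.1 p.2 := ⟨(n,k), hk, hx⟩
  rw [chaconT0, dif_pos hE]
  have hs := hE.choose_spec
  have hw := T0_welldef hs.1 hs.2 hk hx
  linarith

lemma T0inv_eval {n k : ℕ} {x : ℝ} (hk : k + 1 < chaconH n) (hx : x ∈ chaconLevel n (k+1)) :
    chaconT0inv x = x - chaconL n (k+1) + chaconL n k := by
  have hE : ∃ p : ℕ × ℕ, p.2 + 1 < chaconH p.1 ∧ x ∈ chaconLevel p.1 (p.2 + 1) :=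
    ⟨(n,k), hk, hx⟩
  rw [chaconT0inv, dif_pos hE]
  have hs := hE.choose_spec
  have hw := T0inv_welldef hs.1 hs.2 hk hx
  linarith

lemma coe_T {X : ChaconX} {n k : ℕ} (hk : k + 1 < chaconH n)
    (hx : (X:ℝ) ∈ chaconLevel n k) :
    ((chaconT X : ChaconX) : ℝ) = (X:ℝ) - chaconL n k + chaconL n (k+1) := by
  show max 0 (chaconT0 (X:ℝ)) = _
  rw [T0_eval hk hx]
  have h1 := hx.1
  have h2 := L_nonneg n (k+1)
  rw [max_eq_right]; linarith

lemma T_mem {X : ChaconX} {n k : ℕ} (hk : k + 1 < chaconH n)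
    (hx : (X:ℝ) ∈ chaconLevel n k) :
    ((chaconT X : ChaconX) : ℝ) ∈ chaconLevel n (k+1) := by
  rw [coe_T hk hx]
  obtain ⟨h1, h2⟩ := hx
  exact ⟨by linarith, by linarith⟩

lemma coe_Tinv {X : ChaconX} {n k : ℕ} (hk : k + 1 < chaconH n)
    (hx : (X:ℝ) ∈ chaconLevel n (k+1)) :
    ((chaconTinv X : ChaconX) : ℝ) = (X:ℝ) - chaconL n (k+1) + chaconL n k := by
  show max 0 (chaconT0inv (X:ℝ)) = _
  rw [T0inv_eval hk hx]
  have h1 := hx.1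
  have h2 := L_nonneg n k
  rw [max_eq_right]; linarith

lemma Tinv_mem {X : ChaconX} {n k : ℕ} (hk : k + 1 < chaconH n)
    (hx : (X:ℝ) ∈ chaconLevel n (k+1)) :
    ((chaconTinv X : ChaconX) : ℝ) ∈ chaconLevel n k := by
  rw [coe_Tinv hk hx]
  obtain ⟨h1, h2⟩ := hx
  exact ⟨by linarith, by linarith⟩

/-! #### Coverage of `ℝ₊` by towers -/

lemma M_zero : ∀ n, M n 0 = 0
  | 0 => rfl
  | n + 1 => by rw [M, if_pos (h_pos n), M_zero n]

lemma L_zero (n : ℕ) : chaconL n 0 = 0 := by rw [L_eq, M_zero]; simp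

lemma exists_tower {x : ℝ} (hx : 0 ≤ x) : ∃ n k, k < chaconH n ∧ x ∈ chaconLevel n k := by
  obtain ⟨n, hn⟩ := pow_unbounded_of_one_lt x (by norm_num : (1:ℝ) < 4/3)
  have hco : (3:ℝ) ^ n * (3:ℝ)⁻¹ ^ n = 1 := by rw [← mul_pow]; norm_num
  have hh : x < (chaconH n : ℝ) * (3:ℝ)⁻¹ ^ n := by
    apply lt_of_lt_of_le hn
    have h1 : ((4:ℝ)/3) ^ n = (4:ℝ) ^ n * (3:ℝ)⁻¹ ^ n := by rw [div_eq_mul_inv, mul_pow]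
    rw [h1]
    apply mul_le_mul_of_nonneg_right _ (eps_pos n).le
    exact_mod_cast h_ge n
  have hp : (0:ℝ) < (3:ℝ) ^ n := by positivity
  have hxu : 0 ≤ x * 3 ^ n := by positivity
  have hult : x * 3 ^ n < (chaconH n : ℝ) := by
    calc x * 3 ^ n < ((chaconH n : ℝ) * (3:ℝ)⁻¹ ^ n) * 3 ^ n :=
          mul_lt_mul_of_pos_right hh hp
    _ = (chaconH n : ℝ) := by rw [mul_assoc, mul_comm ((3:ℝ)⁻¹ ^ n), hco, mul_one]
  set u : ℤ := ⌊x * 3 ^ n⌋ with hu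
  have hu0 : 0 ≤ u := Int.le_floor.mpr (by exact_mod_cast hxu)
  have hun : u < (chaconH n : ℤ) := Int.floor_lt.mpr (by exact_mod_cast hult)
  obtain ⟨k, hk, hMk⟩ := M_surj n u.toNat (by omega)
  refine ⟨n, k, hk, ?_⟩
  have h1 : (u:ℝ) ≤ x * 3 ^ n := Int.floor_le _
  have h2 : x * 3 ^ n < u + 1 := Int.lt_floor_add_one _
  have hcast : ((M n k : ℕ) : ℝ) = (u : ℝ) := by
    rw [hMk]
    exact_mod_cast Int.toNat_of_nonneg hu0
  constructor
  · rw [L_eq, hcast]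
    have := mul_le_mul_of_nonneg_right h1 (eps_pos n).le
    calc (u:ℝ) * (3:ℝ)⁻¹ ^ n ≤ x * 3 ^ n * (3:ℝ)⁻¹ ^ n := this
    _ = x := by rw [mul_assoc, hco, mul_one]
  · rw [L_eq, hcast]
    have := mul_lt_mul_of_pos_right h2 (eps_pos n)
    calc x = x * 3 ^ n * (3:ℝ)⁻¹ ^ n := by rw [mul_assoc, hco, mul_one]
    _ < ((u:ℝ) + 1) * (3:ℝ)⁻¹ ^ n := this
    _ = (u:ℝ) * (3:ℝ)⁻¹ ^ n + (3:ℝ)⁻¹ ^ n := by ring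

lemma tower_lift_to {n k : ℕ} {x : ℝ} (hk : k < chaconH n) (hx : x ∈ chaconLevel n k)
    {P : ℕ} (hP : n ≤ P) : ∃ K, K < chaconH P ∧ x ∈ chaconLevel P K := by
  induction P, hP using Nat.le_induction with
  | base => exact ⟨k, hk, hx⟩
  | succ P hP ih =>
      obtain ⟨K, hK, hxK⟩ := ih
      obtain ⟨τ, hτ, hm⟩ := thirds hK hxK
      have := off_le P τ
      have := h_succ P
      exact ⟨K + off P τ, by omega, hm⟩

lemma exists_wit (X : ChaconX) : ∃ n k, k + 1 < chaconH n ∧ (X:ℝ) ∈ chaconLevel n k := by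
  obtain ⟨n, k, hk, hx⟩ := exists_tower X.2
  obtain ⟨τ, hτ, hm⟩ := thirds hk hx
  have := off_le n τ
  have := h_succ n
  exact ⟨n + 1, k + off n τ, by omega, hm⟩

/-! #### `T` and `T⁻¹` are mutually inverse -/

lemma Tinv_T (X : ChaconX) : chaconTinv (chaconT X) = X := by
  obtain ⟨n, k, hk, hx⟩ := exists_wit X
  have hTm := T_mem hk hx
  apply Subtype.ext
  rw [coe_Tinv hk hTm, coe_T hk hx]; ring

lemma T_inj : Function.Injective chaconT := fun a b h => by
  rw [← Tinv_T a, ← Tinv_T b, h]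

lemma M_pos {n k : ℕ} (hk0 : 0 < k) (hk : k < chaconH n) : 0 < M n k := by
  rcases Nat.eq_zero_or_pos (M n k) with h | h
  · exfalso
    have := M_inj n k 0 hk (h_pos n) (by rw [M_zero]; exact h)
    omega
  · exact h

lemma T_pos (X : ChaconX) : (0:ℝ) < ((chaconT X : ChaconX) : ℝ) := by
  obtain ⟨n, k, hk, hx⟩ := exists_wit X
  have h1 := (T_mem hk hx).1
  have h2 : 0 < chaconL n (k+1) := by
    rw [L_eq]
    have := M_pos (Nat.succ_pos k) hk
    have h3 : (1:ℝ) ≤ (M n (k+1) : ℝ) := by exact_mod_cast this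
    nlinarith [eps_pos n]
  linarith

/-! #### The orbit of `0` -/

def czero : ChaconX := ⟨0, Set.self_mem_Ici⟩

def Sset : Set ChaconX := {z | ∃ s : ℕ, chaconT^[s] czero = z}

lemma czero_mem_S : czero ∈ Sset := ⟨0, rfl⟩

lemma T_ne_czero (X : ChaconX) : chaconT X ≠ czero := by
  intro h
  have := T_pos X
  rw [h] at this
  exact lt_irrefl _ (by exact_mod_cast this)

lemma T_notin_S {X : ChaconX} (h : X ∉ Sset) : chaconT X ∉ Sset := by
  rintro ⟨s, hs⟩
  match s with
  | 0 => exact T_ne_czero X hs.symm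
  | s + 1 =>
      rw [Function.iterate_succ_apply'] at hs
      exact h ⟨s, T_inj hs⟩

lemma exists_wit_pos {X : ChaconX} (hX : X ≠ czero) :
    ∃ n k, 1 ≤ k ∧ k + 1 < chaconH n ∧ (X:ℝ) ∈ chaconLevel n k := by
  have hx0 : (0:ℝ) < (X:ℝ) := by
    rcases lt_or_eq_of_le (Set.mem_Ici.mp X.2) with h | h
    · exact h
    · exact absurd (Subtype.ext h.symm) hX
  obtain ⟨n0, k0, hk0, hx0'⟩ := exists_tower X.2
  obtain ⟨ne, hne⟩ := exists_pow_lt_of_lt_one hx0 (by norm_num : (3:ℝ)⁻¹ < 1)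
  obtain ⟨K, hK, hxK⟩ := tower_lift_to hk0 hx0' (le_max_left n0 ne)
  set P := max n0 ne
  have hKpos : 1 ≤ K := by
    by_contra hc
    have hK0 : K = 0 := by omega
    rw [hK0] at hxK
    have h2 := hxK.2
    rw [L_zero, zero_add] at h2
    have : (3:ℝ)⁻¹ ^ P ≤ (3:ℝ)⁻¹ ^ ne :=
      pow_le_pow_of_le_one (by norm_num) (by norm_num) (le_max_right n0 ne)
    linarith
  obtain ⟨τ, hτ, hm⟩ := thirds hK hxK
  have := off_le P τ
  have := h_succ P
  refine ⟨P + 1, K + off P τ, by omega, by omega, hm⟩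

lemma T_Tinv {X : ChaconX} (hX : X ≠ czero) : chaconT (chaconTinv X) = X := by
  obtain ⟨n, k, hk1, hk, hx⟩ := exists_wit_pos hX
  have hk' : (k - 1) + 1 < chaconH n := by omega
  have hx' : (X:ℝ) ∈ chaconLevel n ((k-1)+1) := by
    rw [show k - 1 + 1 = k from by omega]; exact hx
  have hm := Tinv_mem hk' hx'
  apply Subtype.ext
  rw [coe_T hk' hm, coe_Tinv hk' hx']; ring

lemma Tinv_notin_S {X : ChaconX} (h : X ∉ Sset) : chaconTinv X ∉ Sset := by
  rintro ⟨s, hs⟩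
  have hX0 : X ≠ czero := fun he => h (he ▸ czero_mem_S)
  exact h ⟨s + 1, by rw [Function.iterate_succ_apply', hs, T_Tinv hX0]⟩

lemma T_iter_notin_S {X : ChaconX} (h : X ∉ Sset) (s : ℕ) : chaconT^[s] X ∉ Sset := by
  induction s with
  | zero => exact h
  | succ s ih => rw [Function.iterate_succ_apply']; exact T_notin_S ih

lemma Tinv_iter_notin_S {X : ChaconX} (h : X ∉ Sset) (s : ℕ) : chaconTinv^[s] X ∉ Sset := by
  induction s with
  | zero => exact h
  | succ s ih => rw [Function.iterate_succ_apply']; exact Tinv_notin_S ih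

lemma Tinv_iter_T_iter (X : ChaconX) (s : ℕ) : chaconTinv^[s] (chaconT^[s] X) = X := by
  induction s with
  | zero => rfl
  | succ s ih =>
      rw [Function.iterate_succ_apply' (f := chaconT), Function.iterate_succ_apply
        (f := chaconTinv), Tinv_T, ih]

lemma T_iter_Tinv_iter {X : ChaconX} (h : X ∉ Sset) (s : ℕ) :
    chaconT^[s] (chaconTinv^[s] X) = X := by
  induction s with
  | zero => rfl
  | succ s ih =>
      have h1 : chaconTinv^[s] X ∉ Sset := Tinv_iter_notin_S h s
      have h2 : chaconTinv^[s] X ≠ czero := fun he => h1 (he ▸ czero_mem_S)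
      rw [Function.iterate_succ_apply' (f := chaconTinv), Function.iterate_succ_apply
        (f := chaconT), T_Tinv h2, ih]

/-! #### Algebra of `chaconTZ` away from the orbit of `0` -/

lemma TZ_app (j : ℤ) (X : ChaconX) :
    chaconTZ j X = if 0 ≤ j then chaconT^[j.toNat] X else chaconTinv^[(-j).toNat] X := by
  rw [chaconTZ]
  by_cases h : 0 ≤ j <;> simp [h]

lemma cancel_mix {X : ChaconX} (hX : X ∉ Sset) (p q : ℕ) :
    chaconT^[p] (chaconTinv^[q] X) =
      if q ≤ p then chaconT^[p - q] X else chaconTinv^[q - p] X := by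
  split_ifs with h
  · have h2 := Function.iterate_add_apply chaconT (p - q) q (chaconTinv^[q] X)
    rw [show p - q + q = p from by omega] at h2
    rw [h2, T_iter_Tinv_iter hX q]
  · have h2 := Function.iterate_add_apply chaconTinv p (q - p) X
    rw [show p + (q - p) = q from by omega] at h2
    rw [h2, T_iter_Tinv_iter (Tinv_iter_notin_S hX (q - p)) p]

lemma cancel_mix' (X : ChaconX) (p q : ℕ) :
    chaconTinv^[p] (chaconT^[q] X) =
      if q ≤ p then chaconTinv^[p - q] X else chaconT^[q - p] X := by
  split_ifs with h
  · have h2 := Function.iterate_add_apply chaconTinv (p - q) q (chaconT^[q] X)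
    rw [show p - q + q = p from by omega] at h2
    rw [h2, Tinv_iter_T_iter]
  · have h2 := Function.iterate_add_apply chaconT p (q - p) X
    rw [show p + (q - p) = q from by omega] at h2
    rw [h2, Tinv_iter_T_iter]

lemma TZ_add (a b : ℤ) {X : ChaconX} (hX : X ∉ Sset) :
    chaconTZ a (chaconTZ b X) = chaconTZ (a + b) X := by
  rw [TZ_app b, TZ_app a, TZ_app (a+b)]
  by_cases hb : 0 ≤ b <;> by_cases ha : 0 ≤ a
  · rw [if_pos hb, if_pos ha, if_pos (by omega), ← Function.iterate_add_apply]
    congr 1; omega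
  · rw [if_pos hb, if_neg ha, cancel_mix' X]
    rcases lt_trichotomy (a + b) 0 with hab | hab | hab
    · rw [if_pos (show b.toNat ≤ (-a).toNat from by omega), if_neg (by omega)]
      congr 1; omega
    · rw [if_pos (show b.toNat ≤ (-a).toNat from by omega), if_pos (by omega),
        show (-a).toNat - b.toNat = 0 from by omega, show (a+b).toNat = 0 from by omega]
      rfl
    · rw [if_neg (show ¬ b.toNat ≤ (-a).toNat from by omega), if_pos (by omega)]
      congr 1; omega
  · rw [if_neg hb, if_pos ha, cancel_mix hX]
    rcases lt_trichotomy (a + b) 0 with hab | hab | hab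
    · rw [if_neg (show ¬ (-b).toNat ≤ a.toNat from by omega), if_neg (by omega)]
      congr 1; omega
    · rw [if_pos (show (-b).toNat ≤ a.toNat from by omega), if_pos (by omega),
        show a.toNat - (-b).toNat = 0 from by omega, show (a+b).toNat = 0 from by omega]
    · rw [if_pos (show (-b).toNat ≤ a.toNat from by omega), if_pos (by omega)]
      congr 1; omega
  · rw [if_neg hb, if_neg ha, ← Function.iterate_add_apply, if_neg (by omega)]
    congr 1; omega

/-! #### Boxes in `X^d` -/

lemma C_mono {n : ℕ} : chaconC n ⊆ chaconC (n+1) := by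
  rintro X ⟨k, hk, hx⟩
  obtain ⟨τ, hτ, hm⟩ := thirds (by have := h_half_le n; omega : k < chaconH n) hx
  refine ⟨k + off n τ, ?_, hm⟩
  have := off_le n τ
  rw [h_half]
  have := h_half_le n
  omega

lemma C_mono' {n n' : ℕ} (h : n ≤ n') : chaconC n ⊆ chaconC n' := by
  induction n', h using Nat.le_induction with
  | base => exact subset_rfl
  | succ n' h ih => exact ih.trans C_mono

lemma mem_C_large (X : ChaconX) : ∃ N, ∀ n, N ≤ n → X ∈ chaconC n := by
  obtain ⟨n, k, hk, hx⟩ := exists_tower X.2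
  refine ⟨n + 1, fun n' hn' => C_mono' hn' ?_⟩
  obtain ⟨τ, hτ, hm⟩ := thirds hk hx
  refine ⟨k + off n τ, ?_, hm⟩
  have := off_le n τ
  rw [h_half]
  omega

variable {d : ℕ}

def Box (d n : ℕ) (v : Fin d → ℕ) : Set (Fin d → ChaconX) :=
  {x | ∀ i, (x i : ℝ) ∈ chaconLevel n (v i)}

lemma Box_nonempty (n : ℕ) (v : Fin d → ℕ) : (Box d n v).Nonempty := by
  refine ⟨fun i => ⟨chaconL n (v i), L_nonneg n (v i)⟩, fun i => ⟨le_refl _, ?_⟩⟩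
  have := eps_pos n
  simp only []
  linarith

lemma Box_sub_Cd {n : ℕ} {v : Fin d → ℕ} (hv : ∀ i, v i < chaconH n / 2) :
    Box d n v ⊆ chaconCd (Fin d) n := fun x hx i => ⟨v i, hv i, hx i⟩

lemma Box_vec_unique {n : ℕ} {v w : Fin d → ℕ} {x : Fin d → ChaconX}
    (hv : ∀ i, v i < chaconH n) (hw : ∀ i, w i < chaconH n)
    (hxv : x ∈ Box d n v) (hxw : x ∈ Box d n w) : v = w :=
  funext fun i => level_unique (hv i) (hw i) (hxv i) (hxw i)

lemma Td_iter_apply (t : ℕ) (x : Fin d → ChaconX) (i : Fin d) :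
    (chaconTd (Fin d))^[t] x i = chaconT^[t] (x i) := by
  induction t generalizing x with
  | zero => rfl
  | succ t ih =>
      rw [Function.iterate_succ_apply, Function.iterate_succ_apply]
      exact ih (chaconTd (Fin d) x)

lemma TdZ_coe (t : ℕ) (x : Fin d → ChaconX) :
    chaconTdZ (Fin d) (t : ℤ) x = (chaconTd (Fin d))^[t] x := by
  funext i
  rw [chaconTdZ, TZ_app, if_pos (by positivity), Td_iter_apply]
  norm_num

lemma TdZ_negone (x : Fin d → ChaconX) :
    chaconTdZ (Fin d) (-1) x = fun i => chaconTinv (x i) := by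
  funext i
  rw [chaconTdZ, TZ_app, if_neg (by norm_num)]
  norm_num

lemma mem_level_ne_czero {n k : ℕ} {X : ChaconX} (hk0 : 0 < k) (hk : k < chaconH n)
    (hx : (X:ℝ) ∈ chaconLevel n k) : X ≠ czero := by
  intro he
  have h0 : ((czero : ChaconX) : ℝ) ∈ chaconLevel n 0 := by
    have hc : ((czero : ChaconX) : ℝ) = 0 := rfl
    constructor
    · rw [hc, L_zero]
    · rw [hc, L_zero]
      simpa using eps_pos n
  rw [he] at hx
  have := level_unique hk (h_pos n) hx h0
  omega

lemma Td_image_Box {n : ℕ} {v : Fin d → ℕ} (hv : ∀ i, v i + 1 < chaconH n) :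
    chaconTd (Fin d) '' Box d n v = Box d n (fun i => v i + 1) := by
  ext y
  constructor
  · rintro ⟨x, hx, rfl⟩ i
    exact T_mem (hv i) (hx i)
  · intro hy
    refine ⟨fun i => chaconTinv (y i), fun i => Tinv_mem (hv i) (hy i), ?_⟩
    funext i
    exact T_Tinv (mem_level_ne_czero (Nat.succ_pos _) (hv i) (hy i))

lemma Td_iter_image_Box {n : ℕ} {v : Fin d → ℕ} (t : ℕ)
    (hv : ∀ i, v i + t < chaconH n) :
    (chaconTd (Fin d))^[t] '' Box d n v = Box d n (fun i => v i + t) := by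
  induction t with
  | zero => simp [Box]
  | succ t ih =>
      rw [Function.iterate_succ', Set.image_comp, ih (fun i => by have := hv i; omega)]
      have he := Td_image_Box (v := fun i => v i + t) (d := d) (n := n)
        (fun i => by show v i + t + 1 < chaconH n; have := hv i; omega)
      rw [he]
      exact congrArg (Box d n) (funext fun i => by show v i + t + 1 = v i + (t + 1); omega)

lemma Cd_mono {n n' : ℕ} (h : n ≤ n') : chaconCd (Fin d) n ⊆ chaconCd (Fin d) n' :=
  fun _ hx i => C_mono' h (hx i)

/-! #### Structure of diagonals -/

lemma diag_struct {n : ℕ} {Dn : Set (Fin d → ChaconX)}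
    (hdiag : IsNDiagonal (Fin d) n Dn) :
    ∃ (V : Fin d → ℕ) (l : ℕ),
      (∀ a, a ≤ l → ∀ i, V i + a < chaconH n / 2) ∧
      Dn = ⋃ a ∈ Finset.range (l + 1), Box d n (fun i => V i + a) ∧
      ¬ ((fun x (i : Fin d) => chaconTinv (x i)) '' Box d n V ⊆ chaconCd (Fin d) n) ∧
      ¬ ((chaconTd (Fin d))^[l + 1] '' Box d n V ⊆ chaconCd (Fin d) n) := by
  obtain ⟨B, l, hbox, hneg1, hneg2, hDeq⟩ := hdiag
  obtain ⟨V, hV, hBeq⟩ := hbox 0 (Nat.zero_le l)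
  have hB0 : chaconTdZ (Fin d) ((0:ℕ) : ℤ) '' B = B := by
    have hpt : ∀ x ∈ B, chaconTdZ (Fin d) ((0:ℕ):ℤ) x = id x := fun x _ => by
      rw [TdZ_coe]; rfl
    rw [Set.image_congr hpt, Set.image_id]
  rw [hB0] at hBeq
  have hBV : B = Box d n V := hBeq
  have main : ∀ a, a ≤ l →
      chaconTdZ (Fin d) (a : ℤ) '' B = Box d n (fun i => V i + a)
      ∧ ∀ i, V i + a < chaconH n / 2 := by
    intro a
    induction a with
    | zero =>
        intro _
        have hfz : (fun i : Fin d => V i + 0) = V := by funext i; omega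
        constructor
        · rw [hB0, hBV, hfz]
        · intro i
          have := hV i
          omega
    | succ a ih =>
        intro ha
        obtain ⟨ihe, ihb⟩ := ih (by omega)
        have hstep : chaconTdZ (Fin d) ((a+1 : ℕ) : ℤ) '' B
            = Box d n (fun i => V i + (a+1)) := by
          have h1 : ∀ x, chaconTdZ (Fin d) ((a+1 : ℕ) : ℤ) x
              = chaconTd (Fin d) (chaconTdZ (Fin d) (a : ℕ) x) := by
            intro x
            rw [TdZ_coe, TdZ_coe, Function.iterate_succ_apply']
          have h2 : chaconTdZ (Fin d) ((a+1 : ℕ) : ℤ) '' B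
              = chaconTd (Fin d) '' (chaconTdZ (Fin d) (a : ℕ) '' B) := by
            rw [← Set.image_comp]
            exact Set.image_congr (fun x _ => h1 x)
          rw [h2, ihe, Td_image_Box (fun i => by
            show V i + a + 1 < chaconH n
            have := ihb i; have := h_half_le n; omega)]
          exact congrArg (Box d n) (funext fun i => by
            show V i + a + 1 = V i + (a + 1); omega)
        constructor
        · exact hstep
        · -- the (a+1)-image is an n-box, so its vector is V + (a+1)
          obtain ⟨w, hw, hweq⟩ := hbox (a+1) ha
          have hweq' : Box d n (fun i => V i + (a+1)) = Box d n w := by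
            rw [← hstep]; exact hweq
          obtain ⟨z, hz⟩ := Box_nonempty n (fun i => V i + (a+1))
          have hz' : z ∈ Box d n w := hweq' ▸ hz
          have := Box_vec_unique (w := w)
            (fun i => by have := ihb i; have := h_half_le n; omega)
            (fun i => by have := hw i; have := h_half_le n; omega) hz hz'
          intro i
          have hwi := hw i
          have : V i + (a+1) = w i := congrFun this i
          omega
  refine ⟨V, l, fun a ha => (main a ha).2, ?_, ?_, ?_⟩
  · rw [hDeq]
    apply Set.iUnion_congr
    intro a
    apply Set.iUnion_congr
    intro ha
    have ha' : a ≤ l := by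
      have := Finset.mem_range.mp ha
      omega
    exact (main a ha').1
  · intro hcon
    apply hneg1
    have : chaconTdZ (Fin d) (-1) '' B
        = (fun x (i : Fin d) => chaconTinv (x i)) '' Box d n V := by
      rw [hBV]
      exact Set.image_congr (fun x _ => TdZ_negone x)
    rw [this]
    exact hcon
  · intro hcon
    apply hneg2
    have : chaconTdZ (Fin d) ((l : ℤ) + 1) '' B
        = (chaconTd (Fin d))^[l + 1] '' Box d n V := by
      rw [hBV, show ((l : ℤ) + 1) = ((l + 1 : ℕ) : ℤ) from by push_cast; ring]
      exact Set.image_congr (fun x _ => TdZ_coe (l+1) x)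
    rw [this]
    exact hcon

lemma box_in_diag {n : ℕ} {V : Fin d → ℕ} {l : ℕ}
    (hbnd : ∀ a, a ≤ l → ∀ i, V i + a < chaconH n / 2)
    {u : Fin d → ℕ} (hu : ∀ i, u i < chaconH n / 2)
    (hsub : Box d n u ⊆ ⋃ a ∈ Finset.range (l + 1), Box d n (fun i => V i + a)) :
    ∃ a, a ≤ l ∧ u = (fun i => V i + a) := by
  obtain ⟨z, hz⟩ := Box_nonempty n u
  obtain ⟨a, ha, hza⟩ := Set.mem_iUnion₂.mp (hsub hz)
  simp only [Finset.mem_range] at ha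
  refine ⟨a, by omega, ?_⟩
  have := h_half_le n
  exact Box_vec_unique (fun i => by have := hu i; omega)
    (fun i => by have := hbnd a (by omega) i; omega) hz hza

lemma mem_diag_box {n : ℕ} {V : Fin d → ℕ} {l : ℕ} {x : Fin d → ChaconX}
    (hx : x ∈ ⋃ a ∈ Finset.range (l + 1), Box d n (fun i => V i + a)) :
    ∃ a, a ≤ l ∧ x ∈ Box d n (fun i => V i + a) := by
  obtain ⟨a, ha, hxa⟩ := Set.mem_iUnion₂.mp hx
  simp only [Finset.mem_range] at ha
  exact ⟨a, by omega, hxa⟩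

/-! #### Measurability -/

lemma measurable_levelSet (n k : ℕ) :
    MeasurableSet {X : ChaconX | (X:ℝ) ∈ chaconLevel n k} :=
  MeasurableSet.preimage measurableSet_Ico measurable_subtype_coe

lemma measurable_C (n : ℕ) : MeasurableSet (chaconC n) := by
  have : chaconC n = ⋃ (k : ℕ) (_ : k < chaconH n / 2),
      {X : ChaconX | (X:ℝ) ∈ chaconLevel n k} := by
    ext X; simp [chaconC]
  rw [this]
  exact MeasurableSet.iUnion fun k => MeasurableSet.iUnion fun _ => measurable_levelSet n k

lemma measurable_Box (n : ℕ) (v : Fin d → ℕ) : MeasurableSet (Box d n v) := by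
  have : Box d n v = ⋂ i, (fun x : Fin d → ChaconX => x i) ⁻¹'
      {X : ChaconX | (X:ℝ) ∈ chaconLevel n (v i)} := by
    ext x; simp [Box]
  rw [this]
  exact MeasurableSet.iInter fun i =>
    MeasurableSet.preimage (measurable_levelSet n (v i)) (measurable_pi_apply i)

lemma measurable_Cd (n : ℕ) : MeasurableSet (chaconCd (Fin d) n) := by
  have : chaconCd (Fin d) n = ⋂ i, (fun x : Fin d → ChaconX => x i) ⁻¹' chaconC n := by
    ext x; simp [chaconCd]
  rw [this]
  exact MeasurableSet.iInter fun i =>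
    MeasurableSet.preimage (measurable_C n) (measurable_pi_apply i)

lemma countable_S : (Sset).Countable := by
  have : Sset = Set.range (fun s : ℕ => chaconT^[s] czero) := by
    ext z; simp [Sset, Set.range]
  rw [this]
  exact Set.countable_range _

def BadSet (d : ℕ) : Set (Fin d → ChaconX) := {x | ∃ i, x i ∈ Sset}

lemma measurable_Bad : MeasurableSet (BadSet d) := by
  have : BadSet d = ⋃ i, (fun x : Fin d → ChaconX => x i) ⁻¹' Sset := by
    ext x; simp [BadSet]
  rw [this]
  exact MeasurableSet.iUnion fun i =>
    MeasurableSet.preimage (countable_S.measurableSet) (measurable_pi_apply i)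

/-! #### Subcolumn index computation -/

lemma off_one (n : ℕ) : off n 1 = 0 := by simp [off]

lemma off_two (n : ℕ) : off n 2 = chaconH n := by simp [off]

lemma off_three (n : ℕ) : off n 3 = 2 * chaconH n + 1 := by simp [off]

lemma tn_eq {n k τ : ℕ} {X : ChaconX} (hk : k < chaconH n) (hτ1 : 1 ≤ τ) (hτ3 : τ ≤ 3)
    (hxn : (X:ℝ) ∈ chaconLevel n k) (hx : (X:ℝ) ∈ chaconLevel (n+1) (k + off n τ)) :
    chaconTn n X = τ := by
  have hE : ∃ k', k' < chaconH n ∧ (X:ℝ) ∈ chaconLevel n k' := ⟨k, hk, hxn⟩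
  rw [chaconTn, dif_pos hE]
  have hs := hE.choose_spec
  have hck : hE.choose = k := level_unique hs.1 hk hs.2 hxn
  rw [hck]
  rw [chaconLevel, Lid_off hk hτ1 hτ3] at hx
  obtain ⟨h1, h2⟩ := hx
  have hco : (3:ℝ)⁻¹ ^ (n+1) * (3:ℝ) ^ (n+1) = 1 := by rw [← mul_pow]; norm_num
  have hp : (0:ℝ) < (3:ℝ) ^ (n+1) := by positivity
  have hfl : ⌊((X:ℝ) - chaconL n k) * (3:ℝ) ^ (n+1)⌋ = (τ:ℤ) - 1 := by
    rw [Int.floor_eq_iff]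
    constructor
    · push_cast
      have h3 := mul_le_mul_of_nonneg_right
        (by linarith : ((τ:ℝ) - 1) * (3:ℝ)⁻¹ ^ (n+1) ≤ (X:ℝ) - chaconL n k) hp.le
      calc (τ:ℝ) - 1 = ((τ:ℝ) - 1) * ((3:ℝ)⁻¹ ^ (n+1) * 3 ^ (n+1)) := by rw [hco]; ring
      _ = ((τ:ℝ) - 1) * (3:ℝ)⁻¹ ^ (n+1) * 3 ^ (n+1) := by ring
      _ ≤ ((X:ℝ) - chaconL n k) * 3 ^ (n+1) := h3
    · push_cast
      have h3 := mul_lt_mul_of_pos_right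
        (by linarith : (X:ℝ) - chaconL n k
          < ((τ:ℝ) - 1) * (3:ℝ)⁻¹ ^ (n+1) + (3:ℝ)⁻¹ ^ (n+1)) hp
      calc ((X:ℝ) - chaconL n k) * 3 ^ (n+1)
          < (((τ:ℝ) - 1) * (3:ℝ)⁻¹ ^ (n+1) + (3:ℝ)⁻¹ ^ (n+1)) * 3 ^ (n+1) := h3
      _ = (τ:ℝ) * ((3:ℝ)⁻¹ ^ (n+1) * 3 ^ (n+1)) := by ring
      _ = (τ:ℝ) := by rw [hco, mul_one]
      _ = (τ:ℝ) - 1 + 1 := by ring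
  rw [hfl]
  omega

lemma Box_congr {n : ℕ} {v w : Fin d → ℕ} (h : ∀ i, v i = w i) :
    Box d n v = Box d n w := congrArg (Box d n) (funext h)

lemma boxTau_one {n : ℕ} {u : Fin d → ℕ} (hu : ∀ i, u i < chaconH n / 2) :
    chaconBoxTau (Fin d) n (Box d n u) (fun _ => 1) = Box d (n+1) u := by
  have hun : ∀ i, u i < chaconH n := fun i => by have := hu i; have := h_half_le n; omega
  ext x
  constructor
  · rintro ⟨hxB, htn⟩
    intro i
    obtain ⟨τ, hτ, hm⟩ := thirds (hun i) (hxB i)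
    have h1 : chaconTn n (x i) = τ := tn_eq (hun i) hτ.1 hτ.2 (hxB i) hm
    have h0 : chaconTn n (x i) = 1 := htn i
    have h2 : τ = 1 := by omega
    subst h2
    rw [off_one] at hm
    exact hm
  · intro hx
    have hx' : ∀ i, (x i : ℝ) ∈ chaconLevel (n+1) (u i + off n 1) := by
      intro i
      rw [off_one]
      exact hx i
    have hxB : x ∈ Box d n u := fun i =>
      level_sub (hun i) (le_refl 1) (by omega) (hx' i)
    refine ⟨hxB, fun i => ?_⟩
    show chaconTn n (x i) = 1
    exact tn_eq (hun i) (le_refl 1) (by omega) (hxB i) (hx' i)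

lemma off_diff_det {n : ℕ} {t1 t2 t3 t4 : ℕ}
    (h1 : 1 ≤ t1 ∧ t1 ≤ 3) (h2 : 1 ≤ t2 ∧ t2 ≤ 3) (h3 : 1 ≤ t3 ∧ t3 ≤ 3)
    (h4 : 1 ≤ t4 ∧ t4 ≤ 3)
    (hdiff : (off n t2 : ℤ) - off n t1 = (off n t4 : ℤ) - off n t3)
    (hne : t3 ≠ t4) : t1 = t3 ∧ t2 = t4 := by
  have hh := h_pos n
  obtain ⟨h1a, h1b⟩ := h1
  obtain ⟨h2a, h2b⟩ := h2
  obtain ⟨h3a, h3b⟩ := h3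
  obtain ⟨h4a, h4b⟩ := h4
  interval_cases t1 <;> interval_cases t2 <;> interval_cases t3 <;> interval_cases t4 <;>
    simp only [off_one, off_two, off_three] at hdiff <;> omega

/-! #### Climbing inside `Cₙ` -/

lemma climb_in_C {m : ℕ} {v : Fin d → ℕ} (hv : ∀ i, v i < chaconH m / 2)
    {z : Fin d → ChaconX} {δ : ℕ} (hz : z ∈ Box d m v)
    (hC : ∀ t, t ≤ δ → (chaconTd (Fin d))^[t] z ∈ chaconCd (Fin d) m) :
    ∀ t, t ≤ δ → (chaconTd (Fin d))^[t] z ∈ Box d m (fun i => v i + t)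
      ∧ (∀ i, v i + t < chaconH m / 2) := by
  intro t
  induction t with
  | zero =>
      intro _
      constructor
      · have he : Box d m v = Box d m (fun i => v i + 0) := Box_congr (fun i => by omega)
        rw [← he]
        exact hz
      · intro i; have := hv i; omega
  | succ t ih =>
      intro ht
      obtain ⟨hbox, hbnd⟩ := ih (by omega)
      have hmem : ∀ i, (((chaconTd (Fin d))^[t+1] z i : ChaconX) : ℝ)
          ∈ chaconLevel m (v i + t + 1) := by
        intro i
        have h1 : (chaconTd (Fin d))^[t+1] z i = chaconT ((chaconTd (Fin d))^[t] z i) := by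
          rw [Function.iterate_succ_apply']
          rfl
        rw [h1]
        exact T_mem (show v i + t + 1 < chaconH m from by
          have := hbnd i; have := h_half_le m; omega) (hbox i)
      constructor
      · intro i
        exact hmem i
      · intro i
        obtain ⟨k, hk, hkmem⟩ := hC (t+1) ht i
        have hlt : v i + t + 1 < chaconH m := by
          have := hbnd i; have := h_half_le m; omega
        have he := level_unique hlt (by have := h_half_le m; omega) (hmem i) hkmem
        omega

/-! #### The key lemma: inside one `(n+1)`-crossing, visits to a non-centrally
placed diagonal form a single block -/

lemma key (hd : 0 < d) {n : ℕ}
    {V : Fin d → ℕ} {l : ℕ}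
    (hbnd : ∀ a, a ≤ l → ∀ i, V i + a < chaconH n / 2)
    {V' : Fin d → ℕ} {l' : ℕ}
    (hbnd' : ∀ a, a ≤ l' → ∀ i, V' i + a < chaconH (n+1) / 2)
    (hneg1 : ¬ ((fun x (i : Fin d) => chaconTinv (x i)) '' Box d (n+1) V'
      ⊆ chaconCd (Fin d) (n+1)))
    (hneg2 : ¬ ((chaconTd (Fin d))^[l' + 1] '' Box d (n+1) V'
      ⊆ chaconCd (Fin d) (n+1)))
    (hNC : ¬ CentralTransition (Fin d) n
      (⋃ a ∈ Finset.range (l + 1), Box d n (fun i => V i + a))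
      (⋃ a ∈ Finset.range (l' + 1), Box d (n+1) (fun i => V' i + a)))
    {z : Fin d → ChaconX} {δ : ℕ}
    (hC : ∀ t, t ≤ δ → (chaconTd (Fin d))^[t] z ∈ chaconCd (Fin d) (n+1))
    (hzD : z ∈ ⋃ a ∈ Finset.range (l + 1), Box d n (fun i => V i + a))
    (hzD' : z ∈ ⋃ a ∈ Finset.range (l' + 1), Box d (n+1) (fun i => V' i + a))
    (hzδD : (chaconTd (Fin d))^[δ] z
      ∈ ⋃ a ∈ Finset.range (l + 1), Box d n (fun i => V i + a)) :
    ∀ t, t ≤ δ → (chaconTd (Fin d))^[t] z ∈ chaconCd (Fin d) n := by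
  have hhalf := h_half_le n
  have hhs := h_succ n
  have hhalf1 := h_half n
  obtain ⟨a, ha, hza⟩ := mem_diag_box hzD
  obtain ⟨c₂, hc₂, hzc₂⟩ := mem_diag_box hzD'
  obtain ⟨a', ha', hzδa⟩ := mem_diag_box hzδD
  -- subcolumn patterns at time 0
  have hVa : ∀ i, V i + a < chaconH n / 2 := hbnd a ha
  have hVa' : ∀ i, V i + a' < chaconH n / 2 := hbnd a' ha'
  choose τ hτ hmem using fun i : Fin d =>
    thirds (show V i + a < chaconH n from by have := hVa i; omega) (hza i)
  -- identification of the (n+1)-levels of z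
  have heq : ∀ i, V' i + c₂ = V i + a + off n (τ i) := by
    intro i
    refine level_unique ?_ ?_ (hzc₂ i) (hmem i)
    · have := hbnd' c₂ hc₂ i
      have := h_half_le (n+1)
      omega
    · have := off_le n (τ i)
      have := hVa i
      omega
  -- climb along the (n+1)-tower
  have hclimb := climb_in_C (hbnd' c₂ hc₂) hzc₂ hC
  -- subcolumn patterns at time δ
  choose τ' hτ' hmem' using fun i : Fin d =>
    thirds (show V i + a' < chaconH n from by have := hVa' i; omega) (hzδa i)
  have heq' : ∀ i, V' i + c₂ + δ = V i + a' + off n (τ' i) := by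
    intro i
    obtain ⟨hboxδ, hbndδ⟩ := hclimb δ (le_refl δ)
    refine level_unique ?_ ?_ (hboxδ i) (hmem' i)
    · have := hbndδ i
      have := h_half_le (n+1)
      omega
    · have := off_le n (τ' i)
      have := hVa' i
      omega
  by_cases hsame : ∀ i, τ i = τ' i
  · -- same pattern: the whole interval lies in `Cₙᵈ`
    have i₀ : Fin d := ⟨0, hd⟩
    have haa' : a + δ = a' := by
      have h1 := heq i₀
      have h2 := heq' i₀
      rw [hsame i₀] at h1
      omega
    intro t ht
    intro i
    refine ⟨V i + a + t, by have := hVa' i; omega, ?_⟩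
    obtain ⟨hboxt, hbndt⟩ := hclimb t ht
    have hidx : V' i + c₂ + t = (V i + a + t) + off n (τ i) := by
      have := heq i; omega
    have hmt : (((chaconTd (Fin d))^[t] z i : ChaconX) : ℝ)
        ∈ chaconLevel (n+1) (V' i + c₂ + t) := hboxt i
    rw [hidx] at hmt
    exact level_sub (show V i + a + t < chaconH n from by
      have := hVa' i; omega) (hτ i).1 (hτ i).2 hmt
  · -- different pattern: the transition would be central, contradiction
    exfalso
    push_neg at hsame
    obtain ⟨i₀, hne₀⟩ := hsame
    have hconst : ∀ i, (off n (τ' i) : ℤ) - off n (τ i) = (a : ℤ) + δ - a' := by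
      intro i
      have h1 := heq i
      have h2 := heq' i
      omega
    have hpure : ∀ i, τ i = τ i₀ ∧ τ' i = τ' i₀ := by
      intro i
      refine off_diff_det (n := n) (hτ i) (hτ' i) (hτ i₀) (hτ' i₀) ?_ hne₀
      rw [hconst i, hconst i₀]
    apply hNC
    intro B hB hBsub
    obtain ⟨u, hu, hBeq⟩ := hB
    have hBbox : B = Box d n u := hBeq
    rw [hBbox] at hBsub
    obtain ⟨a'', ha'', hueq⟩ := box_in_diag hbnd hu hBsub
    rw [hBbox, boxTau_one hu]
    -- target vector over ℤ
    set p : ℕ := τ i₀ with hp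
    have heqp : ∀ i, V' i + c₂ = V i + a + off n p := by
      intro i
      have := heq i
      rw [(hpure i).1] at this
      exact this
    have huV : ∀ i, (u i : ℤ) = V' i + ((c₂ : ℤ) + a'' - a - off n p) := by
      intro i
      have h1 := heqp i
      have h2 : u i = V i + a'' := congrFun hueq i
      omega
    set s : ℤ := (c₂ : ℤ) + a'' - a - off n p with hs
    have hV'0 : ∀ i, V' i + 0 < chaconH (n+1) / 2 := hbnd' 0 (Nat.zero_le l')
    rcases lt_trichotomy s 0 with hslt | hs0 | hsgt
    · -- s < 0 : T⁻¹ of the base box of D' would stay in C^d, contradiction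
      exfalso
      apply hneg1
      rintro y ⟨x, hx, rfl⟩
      intro i
      have hV'pos : 1 ≤ V' i := by have := huV i; omega
      refine ⟨V' i - 1, ?_, ?_⟩
      · have := hV'0 i; omega
      · have hki : (V' i - 1) + 1 < chaconH (n+1) := by
          have := hV'0 i
          have := h_half_le (n+1)
          omega
        have hxi : (x i : ℝ) ∈ chaconLevel (n+1) ((V' i - 1) + 1) := by
          rw [show V' i - 1 + 1 = V' i from by omega]
          exact hx i
        exact Tinv_mem hki hxi
    · -- s = 0 ≤ l' works, as do all 0 ≤ s ≤ l'
      intro x hx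
      have hus : ∀ i, u i = V' i + 0 := fun i => by have := huV i; omega
      refine Set.mem_biUnion (Finset.mem_range.2 (by omega : (0:ℕ) < l' + 1)) ?_
      rw [← Box_congr hus]
      exact hx
    · -- 0 < s : check s ≤ l', else maximality on the top is violated
      by_cases hsl : s ≤ (l' : ℤ)
      · intro x hx
        have hus : ∀ i, u i = V' i + s.toNat := fun i => by have := huV i; omega
        refine Set.mem_biUnion (Finset.mem_range.2 (by omega : s.toNat < l' + 1)) ?_
        rw [← Box_congr hus]
        exact hx
      · exfalso
        apply hneg2
        have himg := Td_iter_image_Box (d := d) (n := n+1) (v := V') (l' + 1)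
          (fun i => by
            have h1 := huV i
            have h2 := hu i
            have := h_half_le (n+1)
            omega)
        rw [himg]
        apply Box_sub_Cd
        intro i
        have h1 := huV i
        have h2 := hu i
        omega

/-! #### Measure-theoretic facts -/

open MeasureTheory

variable {σ : Measure (Fin d → ChaconX)}

lemma aemeasurable_Td (hσ : σ ≠ 0) (hinv : σ.map (chaconTd (Fin d)) = σ) :
    AEMeasurable (chaconTd (Fin d)) σ := by
  by_contra h
  rw [Measure.map_of_not_aemeasurable h] at hinv
  exact hσ hinv.symm

lemma Td_iter_inv (hσ : σ ≠ 0) (hinv : σ.map (chaconTd (Fin d)) = σ) (t : ℕ) :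
    AEMeasurable ((chaconTd (Fin d))^[t]) σ ∧ σ.map ((chaconTd (Fin d))^[t]) = σ := by
  induction t with
  | zero =>
      rw [Function.iterate_zero]
      exact ⟨aemeasurable_id, Measure.map_id⟩
  | succ t ih =>
      have h1 := aemeasurable_Td hσ hinv
      have h2 : AEMeasurable ((chaconTd (Fin d))^[t]) (σ.map (chaconTd (Fin d))) := by
        rw [hinv]; exact ih.1
      constructor
      · rw [Function.iterate_succ]
        exact h2.comp_aemeasurable h1
      · rw [Function.iterate_succ, ← AEMeasurable.map_map_of_aemeasurable h2 h1, hinv, ih.2]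

lemma meas_preimage_iter (hσ : σ ≠ 0) (hinv : σ.map (chaconTd (Fin d)) = σ) (t : ℕ)
    {A : Set (Fin d → ChaconX)} (hA : MeasurableSet A) :
    σ ((chaconTd (Fin d))^[t] ⁻¹' A) = σ A := by
  have h := Td_iter_inv hσ hinv t
  rw [← Measure.map_apply_of_aemeasurable h.1 hA, h.2]

lemma meas_preimage (hσ : σ ≠ 0) (hinv : σ.map (chaconTd (Fin d)) = σ)
    {A : Set (Fin d → ChaconX)} (hA : MeasurableSet A) :
    σ (chaconTd (Fin d) ⁻¹' A) = σ A := by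
  rw [← Measure.map_apply_of_aemeasurable (aemeasurable_Td hσ hinv) hA, hinv]

lemma bad_null (hσ : σ ≠ 0) (hinv : σ.map (chaconTd (Fin d)) = σ) : σ (BadSet d) = 0 := by
  have hsub : BadSet d ⊆ ⋃ (i : Fin d) (s : ℕ),
      (fun x : Fin d → ChaconX => x i) ⁻¹' {chaconT^[s] czero} := by
    rintro x ⟨i, s, hs⟩
    exact Set.mem_iUnion.2 ⟨i, Set.mem_iUnion.2 ⟨s, by simp [hs]⟩⟩
  refine measure_mono_null hsub
    (measure_iUnion_null fun i => measure_iUnion_null fun s => ?_)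
  have hms : ∀ s : ℕ, MeasurableSet
      ((fun x : Fin d → ChaconX => x i) ⁻¹' {chaconT^[s] czero}) := fun s =>
    MeasurableSet.preimage (measurableSet_singleton _) (measurable_pi_apply i)
  induction s with
  | zero =>
      have hpre : chaconTd (Fin d) ⁻¹'
          ((fun x : Fin d → ChaconX => x i) ⁻¹' {chaconT^[0] czero}) = ∅ := by
        ext x
        simp only [Set.mem_preimage, Set.mem_singleton_iff, Set.mem_empty_iff_false,
          iff_false, Function.iterate_zero, id]
        exact T_ne_czero (x i)
      have := meas_preimage hσ hinv (hms 0)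
      rw [hpre] at this
      rw [← this, measure_empty]
  | succ s ih =>
      have hpre : chaconTd (Fin d) ⁻¹'
          ((fun x : Fin d → ChaconX => x i) ⁻¹' {chaconT^[s+1] czero})
          = (fun x : Fin d → ChaconX => x i) ⁻¹' {chaconT^[s] czero} := by
        ext x
        simp only [Set.mem_preimage, Set.mem_singleton_iff]
        rw [Function.iterate_succ_apply']
        constructor
        · intro h
          exact T_inj h
        · intro h
          rw [show chaconTd (Fin d) x i = chaconT (x i) from rfl, h]
      have := meas_preimage hσ hinv (hms (s+1))
      rw [hpre] at this
      rw [← this, ih]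

lemma exists_Cd_pos (hσ : σ ≠ 0) : ∃ m, σ (chaconCd (Fin d) m) ≠ 0 := by
  by_contra h
  push_neg at h
  have huniv : (Set.univ : Set (Fin d → ChaconX)) ⊆ ⋃ m, chaconCd (Fin d) m := by
    intro x _
    have hCi : ∀ i : Fin d, ∃ Ni, ∀ n, Ni ≤ n → x i ∈ chaconC n := fun i => mem_C_large (x i)
    choose Nf hNf using hCi
    exact Set.mem_iUnion.2 ⟨Finset.univ.sup Nf,
      fun i => hNf i _ (Finset.le_sup (Finset.mem_univ i))⟩
  have h0 : σ Set.univ = 0 := measure_mono_null huniv (measure_iUnion_null fun m => h m)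
  exact hσ (by rwa [← Measure.measure_univ_eq_zero])

lemma TdZ_nonneg_iter {c : ℤ} (hc : 0 ≤ c) (x : Fin d → ChaconX) :
    chaconTdZ (Fin d) c x = (chaconTd (Fin d))^[c.toNat] x := by
  funext i
  rw [Td_iter_apply]
  show chaconTZ c (x i) = chaconT^[c.toNat] (x i)
  rw [TZ_app, if_pos hc]

end CH

end CHAux

/-- **Lemma (the central case occurs infinitely often).**  If `σ` is a diagonal measure
on `X^d`, `(Dₙ)_{n ≥ n₀}` its family of charged diagonals, and the system
`(X^d, σ, T^{×d})` is conservative, then there are infinitely many integers `n` such that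
the transition from `Dₙ(σ)` to `D_{n+1}(σ)` is the central one,
`D_{n+1}(σ) = Dₙ(σ)(1,…,1)`. -/
theorem chacon_central_case_io (d n₀ : ℕ) (σ : Measure (Fin d → ChaconX)) (hσ : σ ≠ 0)
    (hdm : IsDiagonalMeasure (Fin d) σ)
    (D : ℕ → Set (Fin d → ChaconX))
    (hD : ∀ n, n₀ ≤ n → IsNDiagonal (Fin d) n (D n) ∧ σ (chaconCd (Fin d) n \ D n) = 0)
    (hcons : ZConservative σ (chaconTdZ (Fin d))) :
    ∀ N : ℕ, ∃ n : ℕ, N ≤ n ∧ n₀ ≤ n ∧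
      CentralTransition (Fin d) n (D n) (D (n + 1)) := by
  classical
  intro N
  by_contra hcon
  push_neg at hcon
  rcases Nat.eq_zero_or_pos d with hd0 | hd
  · -- in dimension 0 there are no diagonals at all
    subst hd0
    obtain ⟨hD1, _⟩ := hD n₀ le_rfl
    obtain ⟨B, l, hbox, hneg1, hneg2, hDeq⟩ := hD1
    exact hneg1 (fun x _ i => Fin.elim0 i)
  obtain ⟨hbf, hinv, hdiagm⟩ := hdm
  obtain ⟨m₁, hm₁⟩ := CH.exists_Cd_pos (σ := σ) hσ
  set m := max (max N 1) (max n₀ m₁) with hm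
  have hmN : N ≤ m := le_trans (le_max_left _ _) (le_max_left _ _)
  have hm1 : 1 ≤ m := le_trans (le_max_right _ _) (le_max_left _ _)
  have hmn₀ : n₀ ≤ m := le_trans (le_max_left _ _) (le_max_right _ _)
  have hmm₁ : m₁ ≤ m := le_trans (le_max_right _ _) (le_max_right _ _)
  -- measurability of the diagonals
  have hDmeas : ∀ n, n₀ ≤ n → MeasurableSet (D n) := by
    intro n hn
    obtain ⟨V, l, hb, hDeq, _, _⟩ := CH.diag_struct (hD n hn).1
    rw [hDeq]
    exact (Finset.range (l+1)).measurableSet_biUnion (fun a _ => CH.measurable_Box n _)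
  -- the null set collecting all bad behaviour
  set Nset : Set (Fin d → ChaconX) :=
    (⋃ (n : ℕ) (_ : m ≤ n) (t : ℕ),
      (chaconTd (Fin d))^[t] ⁻¹' (chaconCd (Fin d) n \ D n)) ∪ CH.BadSet d with hNset
  have hNnull : σ Nset = 0 := by
    rw [measure_union_null_iff]
    constructor
    · refine measure_iUnion_null fun n => measure_iUnion_null fun hn =>
        measure_iUnion_null fun t => ?_
      rw [CH.meas_preimage_iter hσ hinv t
        ((CH.measurable_Cd n).diff (hDmeas n (le_trans hmn₀ hn)))]
      exact (hD n (le_trans hmn₀ hn)).2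
    · exact CH.bad_null hσ hinv
  set Nm := MeasureTheory.toMeasurable σ Nset with hNm
  have hNmnull : σ Nm = 0 := by
    rw [hNm, MeasureTheory.measure_toMeasurable]
    exact hNnull
  have hNsub : Nset ⊆ Nm := MeasureTheory.subset_toMeasurable σ Nset
  -- find a positive-measure box in `C_m^d` avoiding `Nm`
  have hCdsub : chaconCd (Fin d) m ⊆
      ⋃ (v : Fin d → Fin (chaconH m / 2)), CH.Box d m (fun i => (v i : ℕ)) := by
    intro x hx
    choose k hk using fun i : Fin d => hx i
    exact Set.mem_iUnion.2 ⟨fun i => ⟨k i, (hk i).1⟩, fun i => (hk i).2⟩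
  have hpos : ∃ v : Fin d → Fin (chaconH m / 2),
      σ (CH.Box d m (fun i => (v i : ℕ)) \ Nm) ≠ 0 := by
    by_contra hall
    push_neg at hall
    have h2 : chaconCd (Fin d) m ⊆
        (⋃ (v : Fin d → Fin (chaconH m / 2)),
          (CH.Box d m (fun i => (v i : ℕ)) \ Nm)) ∪ Nm := by
      intro x hx
      by_cases hxN : x ∈ Nm
      · exact Or.inr hxN
      · obtain ⟨v, hv⟩ := Set.mem_iUnion.mp (hCdsub hx)
        exact Or.inl (Set.mem_iUnion.2 ⟨v, hv, hxN⟩)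
    have h1 : σ (chaconCd (Fin d) m) = 0 := by
      refine measure_mono_null h2 ?_
      rw [measure_union_null_iff]
      exact ⟨measure_iUnion_null fun v => hall v, hNmnull⟩
    exact hm₁ (measure_mono_null (CH.Cd_mono hmm₁) h1)
  obtain ⟨v, hv⟩ := hpos
  set W := CH.Box d m (fun i => (v i : ℕ)) \ Nm with hW
  have hWmeas : MeasurableSet W :=
    (CH.measurable_Box m _).diff (MeasureTheory.measurableSet_toMeasurable σ Nset)
  have hvlt : ∀ i : Fin d, (v i : ℕ) < chaconH m / 2 := fun i => (v i).2
  -- points of `W` are "good"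
  have hGood : ∀ w : Fin d → ChaconX, w ∈ W → (∀ i, w i ∉ CH.Sset) ∧
      (∀ n t, m ≤ n → (chaconTd (Fin d))^[t] w ∈ chaconCd (Fin d) n →
        (chaconTd (Fin d))^[t] w ∈ D n) := by
    intro w hw
    have hnotN : w ∉ Nset := fun hn => hw.2 (hNsub hn)
    constructor
    · intro i hiS
      exact hnotN (Or.inr ⟨i, hiS⟩)
    · intro n t hn hC
      by_contra hDn
      exact hnotN (Or.inl (Set.mem_iUnion.2 ⟨n, Set.mem_iUnion.2
        ⟨hn, Set.mem_iUnion.2 ⟨t, ⟨hC, hDn⟩⟩⟩⟩))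
  -- no positive-time return from `W` to `W`
  have hNR : ∀ y, y ∈ W → ∀ δ : ℕ, 0 < δ → (chaconTd (Fin d))^[δ] y ∈ W → False := by
    intro y hy δ hδ hy'
    have hyBox : y ∈ CH.Box d m (fun i => (v i : ℕ)) := hy.1
    have hy'Box : (chaconTd (Fin d))^[δ] y ∈ CH.Box d m (fun i => (v i : ℕ)) := hy'.1
    have hyCm : y ∈ chaconCd (Fin d) m := CH.Box_sub_Cd hvlt hyBox
    have hy'Cm : (chaconTd (Fin d))^[δ] y ∈ chaconCd (Fin d) m :=
      CH.Box_sub_Cd hvlt hy'Box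
    -- merging level
    have hmerge : ∃ n, m ≤ n ∧ ∀ t, t ≤ δ →
        (chaconTd (Fin d))^[t] y ∈ chaconCd (Fin d) n := by
      have h1 : ∀ t : ℕ, ∃ Nt, ∀ n, Nt ≤ n →
          (chaconTd (Fin d))^[t] y ∈ chaconCd (Fin d) n := by
        intro t
        have h2 : ∀ i : Fin d, ∃ Ni, ∀ n, Ni ≤ n →
            ((chaconTd (Fin d))^[t] y) i ∈ chaconC n := fun i => CH.mem_C_large _
        choose Nf hNf using h2
        exact ⟨Finset.univ.sup Nf, fun n hn i =>
          hNf i n (le_trans (Finset.le_sup (Finset.mem_univ i)) hn)⟩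
      choose Nt hNt using h1
      refine ⟨max m ((Finset.range (δ+1)).sup Nt), le_max_left _ _, fun t ht => ?_⟩
      refine hNt t _ (le_trans ?_ (le_max_right _ _))
      exact Finset.le_sup (Finset.mem_range.2 (by omega))
    obtain ⟨n, hnm, hCn⟩ := hmerge
    -- downward induction from `n` to `m`
    have hdown : ∀ q : ℕ, m ≤ n - q → ∀ t, t ≤ δ →
        (chaconTd (Fin d))^[t] y ∈ chaconCd (Fin d) (n - q) := by
      intro q
      induction q with
      | zero =>
          intro _
          simpa using hCn
      | succ q ih =>
          intro hq
          set n' := n - (q + 1) with hn'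
          have hq1 : q + 1 ≤ n := by
            by_contra hc
            have : n - (q+1) = 0 := by omega
            omega
          have hnq : n - q = n' + 1 := by omega
          have hn'm : m ≤ n' := hq
          have hprev : ∀ t, t ≤ δ →
              (chaconTd (Fin d))^[t] y ∈ chaconCd (Fin d) (n' + 1) := by
            rw [← hnq]
            exact ih (by omega)
          obtain ⟨V, l, hbnd, hDeq, hneg1, hneg2⟩ :=
            CH.diag_struct (hD n' (le_trans hmn₀ hn'm)).1
          obtain ⟨V', l', hbnd', hDeq', hneg1', hneg2'⟩ :=
            CH.diag_struct (hD (n' + 1) (by omega)).1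
          have hNC : ¬ CentralTransition (Fin d) n'
              (⋃ a ∈ Finset.range (l + 1), CH.Box d n' (fun i => V i + a))
              (⋃ a ∈ Finset.range (l' + 1), CH.Box d (n' + 1) (fun i => V' i + a)) := by
            rw [← hDeq, ← hDeq']
            exact hcon n' (le_trans hmN hn'm) (le_trans hmn₀ hn'm)
          have hyCn' : y ∈ chaconCd (Fin d) n' := CH.Cd_mono hn'm hyCm
          have hyCn'1 : y ∈ chaconCd (Fin d) (n' + 1) := CH.Cd_mono (by omega) hyCm
          have hy'Cn' : (chaconTd (Fin d))^[δ] y ∈ chaconCd (Fin d) n' :=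
            CH.Cd_mono hn'm hy'Cm
          have hyD : y ∈ D n' := by
            have := (hGood y hy).2 n' 0 hn'm (by simpa using hyCn')
            simpa using this
          have hyD' : y ∈ D (n' + 1) := by
            have := (hGood y hy).2 (n' + 1) 0 (by omega) (by simpa using hyCn'1)
            simpa using this
          have hyδD : (chaconTd (Fin d))^[δ] y ∈ D n' :=
            (hGood y hy).2 n' δ hn'm hy'Cn'
          rw [hDeq] at hyD hyδD
          rw [hDeq'] at hyD'
          have hkey := CH.key hd hbnd hbnd' hneg1' hneg2' hNC hprev hyD hyD' hyδD
          intro t ht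
          exact hkey t ht
    have hPm : ∀ t, t ≤ δ → (chaconTd (Fin d))^[t] y ∈ chaconCd (Fin d) m := by
      have := hdown (n - m) (by omega)
      rwa [show n - (n - m) = m from by omega] at this
    obtain ⟨hδbox, hδbnd⟩ := CH.climb_in_C hvlt hyBox hPm δ le_rfl
    have i₀ : Fin d := ⟨0, hd⟩
    have h1 : (v i₀ : ℕ) + δ = (v i₀ : ℕ) := by
      refine CH.level_unique ?_ ?_ (hδbox i₀) (hy'Box i₀)
      · have := hδbnd i₀; have := CH.h_half_le m; omega
      · have := hvlt i₀; have := CH.h_half_le m; omega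
    omega
  -- `W` is wandering
  have hWw : ZWandering (chaconTdZ (Fin d)) W := by
    intro j k hjk
    rw [Set.disjoint_left]
    rintro u ⟨y, hy, hju⟩ ⟨y', hy', hku⟩
    have he : chaconTdZ (Fin d) j y = chaconTdZ (Fin d) k y' := hju.trans hku.symm
    have hyS : ∀ i, y i ∉ CH.Sset := (hGood y hy).1
    have hy'S : ∀ i, y' i ∉ CH.Sset := (hGood y' hy').1
    have h1 : ∀ i, chaconTZ j (y i) = chaconTZ k (y' i) := fun i => congrFun he i
    have hy'y : ∀ i, y' i = chaconTZ (-k + j) (y i) := by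
      intro i
      have e0 : chaconTZ ((-k) + k) (y' i) = y' i := by
        rw [show (-k) + k = (0:ℤ) from by ring, CH.TZ_app, if_pos le_rfl]
        rfl
      calc y' i = chaconTZ ((-k) + k) (y' i) := e0.symm
      _ = chaconTZ (-k) (chaconTZ k (y' i)) := (CH.TZ_add (-k) k (hy'S i)).symm
      _ = chaconTZ (-k) (chaconTZ j (y i)) := by rw [h1 i]
      _ = chaconTZ (-k + j) (y i) := CH.TZ_add (-k) j (hyS i)
    rcases lt_trichotomy j k with hlt | heq | hgt
    · have hyy' : ∀ i, chaconTZ (k - j) (y' i) = y i := by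
        intro i
        rw [hy'y i, CH.TZ_add (k - j) (-k + j) (hyS i),
          show (k - j) + (-k + j) = 0 from by ring, CH.TZ_app, if_pos le_rfl]
        rfl
      have hTd : (chaconTd (Fin d))^[(k - j).toNat] y' = y := by
        funext i
        rw [CH.Td_iter_apply]
        have h3 := hyy' i
        rw [CH.TZ_app, if_pos (by omega)] at h3
        exact h3
      exact hNR y' hy' (k - j).toNat (by omega) (by rw [hTd]; exact hy)
    · exact hjk heq
    · have hTd : (chaconTd (Fin d))^[(-k + j).toNat] y = y' := by
        funext i
        rw [CH.Td_iter_apply]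
        have h3 := (hy'y i).symm
        rw [CH.TZ_app, if_pos (by omega)] at h3
        exact h3
      exact hNR y hy (-k + j).toNat (by omega) (by rw [hTd]; exact hy')
  exact hv (hcons W hWmeas hWw)
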